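/- arXiv:2501.14440 — 6 statements merged into one kernel-verified Lean document; each statement's English description precedes it below -/
import Mathlib

section
/- Suppose matrices W₁, ..., W_{H+1} (with W_ℓ ∈ R^{d_ℓ × d_{ℓ−1}}) satisfy the balanced condition W_ℓ W_ℓᵀ = W_{ℓ+1}ᵀ W_{ℓ+1} for all 1 ≤ ℓ ≤ H, and let M = W_{H+1} W_H ⋯ W₁. Then Mᵀ M = (W₁ᵀ W₁)^{H+1} and M Mᵀ = (W_{H+1} W_{H+1}ᵀ)^{H+1}. -/
open Matrix

/-- Product `W (n-1) * ⋯ * W 0` of a chain of matrices with compatible dimensions. -/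
def chainProd (d : ℕ → ℕ) (W : ∀ ℓ, Matrix (Fin (d (ℓ + 1))) (Fin (d ℓ)) ℝ) :
    (n : ℕ) → Matrix (Fin (d n)) (Fin (d 0)) ℝ
  | 0 => 1
  | n + 1 => W n * chainProd d W n

lemma sandwich_pow {m k : ℕ} (A : Matrix (Fin m) (Fin k) ℝ) (B : Matrix (Fin k) (Fin m) ℝ) :
    ∀ n : ℕ, A * (B * A) ^ n * B = (A * B) ^ (n + 1)
  | 0 => by simp
  | n + 1 => by
    have := sandwich_pow A B n
    rw [pow_succ, pow_succ, ← this]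
    simp only [Matrix.mul_assoc]

lemma chain_comm (H : ℕ) (d : ℕ → ℕ)
    (W : ∀ ℓ, Matrix (Fin (d (ℓ + 1))) (Fin (d ℓ)) ℝ)
    (hbal : ∀ ℓ < H, W ℓ * (W ℓ)ᵀ = (W (ℓ + 1))ᵀ * W (ℓ + 1)) :
    ∀ n, n ≤ H → (W n * (W n)ᵀ) * chainProd d W (n + 1)
      = chainProd d W (n + 1) * ((W 0)ᵀ * W 0) := by
  intro n
  induction n with
  | zero =>
    intro _
    show (W 0 * (W 0)ᵀ) * (W 0 * chainProd d W 0) = (W 0 * chainProd d W 0) * ((W 0)ᵀ * W 0)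
    show (W 0 * (W 0)ᵀ) * (W 0 * 1) = (W 0 * 1) * ((W 0)ᵀ * W 0)
    rw [Matrix.mul_one]
    simp only [Matrix.mul_assoc]
  | succ n ih =>
    intro hn
    have hb : W n * (W n)ᵀ = (W (n + 1))ᵀ * W (n + 1) := hbal n (by omega)
    have ih' := ih (by omega)
    show (W (n+1) * (W (n+1))ᵀ) * (W (n+1) * chainProd d W (n+1))
      = (W (n+1) * chainProd d W (n+1)) * ((W 0)ᵀ * W 0)
    calc (W (n+1) * (W (n+1))ᵀ) * (W (n+1) * chainProd d W (n+1))
        = W (n+1) * (((W (n+1))ᵀ * W (n+1)) * chainProd d W (n+1)) := by simp only [Matrix.mul_assoc]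
      _ = W (n+1) * ((W n * (W n)ᵀ) * chainProd d W (n+1)) := by rw [hb]
      _ = W (n+1) * (chainProd d W (n+1) * ((W 0)ᵀ * W 0)) := by rw [ih']
      _ = (W (n+1) * chainProd d W (n+1)) * ((W 0)ᵀ * W 0) := by simp only [Matrix.mul_assoc]

theorem balanced_gram_power (H : ℕ) (d : ℕ → ℕ)
    (W : ∀ ℓ, Matrix (Fin (d (ℓ + 1))) (Fin (d ℓ)) ℝ)
    (hbal : ∀ ℓ < H, W ℓ * (W ℓ)ᵀ = (W (ℓ + 1))ᵀ * W (ℓ + 1)) :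
    (chainProd d W (H + 1))ᵀ * chainProd d W (H + 1) = ((W 0)ᵀ * W 0) ^ (H + 1) ∧
      chainProd d W (H + 1) * (chainProd d W (H + 1))ᵀ = (W H * (W H)ᵀ) ^ (H + 1) := by
  have key : ∀ n, n ≤ H →
      (chainProd d W (n + 1))ᵀ * chainProd d W (n + 1) = ((W 0)ᵀ * W 0) ^ (n + 1) ∧
        chainProd d W (n + 1) * (chainProd d W (n + 1))ᵀ = (W n * (W n)ᵀ) ^ (n + 1) := by
    intro n
    induction n with
    | zero =>
      intro _
      constructor <;>
      · show _ = _
        simp [chainProd, Matrix.transpose_mul]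
    | succ n ih =>
      intro hn
      obtain ⟨ihA, ihB⟩ := ih (by omega)
      have hb : W n * (W n)ᵀ = (W (n + 1))ᵀ * W (n + 1) := hbal n (by omega)
      have hc := chain_comm H d W hbal n (by omega)
      have hdef : chainProd d W (n + 2) = W (n + 1) * chainProd d W (n + 1) := rfl
      constructor
      · rw [hdef, Matrix.transpose_mul]
        calc ((chainProd d W (n+1))ᵀ * (W (n+1))ᵀ) * (W (n+1) * chainProd d W (n+1))
            = (chainProd d W (n+1))ᵀ * (((W (n+1))ᵀ * W (n+1)) * chainProd d W (n+1)) := by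
              simp only [Matrix.mul_assoc]
          _ = (chainProd d W (n+1))ᵀ * ((W n * (W n)ᵀ) * chainProd d W (n+1)) := by rw [hb]
          _ = (chainProd d W (n+1))ᵀ * (chainProd d W (n+1) * ((W 0)ᵀ * W 0)) := by rw [hc]
          _ = ((chainProd d W (n+1))ᵀ * chainProd d W (n+1)) * ((W 0)ᵀ * W 0) := by
              simp only [Matrix.mul_assoc]
          _ = ((W 0)ᵀ * W 0) ^ (n+1) * ((W 0)ᵀ * W 0) := by rw [ihA]
          _ = ((W 0)ᵀ * W 0) ^ (n+2) := by rw [← pow_succ]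
      · rw [hdef, Matrix.transpose_mul]
        calc (W (n+1) * chainProd d W (n+1)) * ((chainProd d W (n+1))ᵀ * (W (n+1))ᵀ)
            = W (n+1) * (chainProd d W (n+1) * (chainProd d W (n+1))ᵀ) * (W (n+1))ᵀ := by
              simp only [Matrix.mul_assoc]
          _ = W (n+1) * (W n * (W n)ᵀ) ^ (n+1) * (W (n+1))ᵀ := by rw [ihB]
          _ = W (n+1) * ((W (n+1))ᵀ * W (n+1)) ^ (n+1) * (W (n+1))ᵀ := by rw [hb]
          _ = (W (n+1) * (W (n+1))ᵀ) ^ (n+2) := sandwich_pow _ _ (n+1)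
  exact key H le_rfl
end

section
/- Let W₁, ..., W_{H+1} be balanced matrices with W_{H+1} W_H ⋯ W₁ = C for a fixed matrix C ∈ R^{d_y × d_x}. Then Σ_{ℓ=1}^{H+1} ‖W_ℓ‖_F² = (H+1)·Σ_i σ_i(C)^{2/(H+1)}, where the sum runs over all singular values σ_i(C) of C (counted with multiplicity, including zeros). -/
open Matrix

/-- Squared Frobenius norm. -/
noncomputable def frobSq {m n : ℕ} (A : Matrix (Fin m) (Fin n) ℝ) : ℝ :=
  ∑ i, ∑ j, (A i j) ^ 2

lemma frobSq_eq_trace {m n : ℕ} (A : Matrix (Fin m) (Fin n) ℝ) :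
    frobSq A = Matrix.trace (Aᵀ * A) := by
  simp [frobSq, Matrix.trace, Matrix.diag, Matrix.mul_apply, sq]
  rw [Finset.sum_comm]

-- trace of cfc of hermitian matrix
lemma trace_cfc {k : ℕ} {B : Matrix (Fin k) (Fin k) ℝ} (hB : B.IsHermitian) (f : ℝ → ℝ) :
    Matrix.trace (hB.cfc f) = ∑ i, f (hB.eigenvalues i) := by
  rw [Matrix.IsHermitian.cfc, Unitary.conjStarAlgAut_apply, Matrix.trace_mul_cycle]
  rw [show (star hB.eigenvectorUnitary : Matrix (Fin k) (Fin k) ℝ) *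
      (hB.eigenvectorUnitary : Matrix (Fin k) (Fin k) ℝ) = 1 from
    Unitary.star_mul_self_of_mem hB.eigenvectorUnitary.2, one_mul, Matrix.trace_diagonal]
  simp


/-- For a balanced factorization `C = W_{H+1} ⋯ W₁`, the total energy
`Σ ‖W_ℓ‖_F²` equals `(H+1)·Σ_i σ_i(C)^{2/(H+1)}`; the sum over singular values of `C`
(with multiplicity, including zeros) is expressed as the sum of the `(H+1)`-th roots of
the eigenvalues of `Cᵀ C` (the extra zero eigenvalues contribute nothing). -/
theorem balanced_energy (H : ℕ) (d : ℕ → ℕ)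
    (W : ∀ ℓ, Matrix (Fin (d (ℓ + 1))) (Fin (d ℓ)) ℝ)
    (hbal : ∀ ℓ < H, W ℓ * (W ℓ)ᵀ = (W (ℓ + 1))ᵀ * W (ℓ + 1))
    (C : Matrix (Fin (d (H + 1))) (Fin (d 0)) ℝ)
    (hC : chainProd d W (H + 1) = C) :
    ∑ ℓ ∈ Finset.range (H + 1), frobSq (W ℓ) =
      (H + 1 : ℝ) *
        ∑ i, ((Matrix.isHermitian_conjTranspose_mul_self C).eigenvalues i) ^
          ((1 : ℝ) / (H + 1)) := by
  set A : Matrix (Fin (d 0)) (Fin (d 0)) ℝ := (W 0)ᵀ * W 0 with hA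
  -- commuting lemma
  have hcomm : ∀ n ≤ H, chainProd d W (n + 1) * A =
      (W n * (W n)ᵀ) * chainProd d W (n + 1) := by
    intro n hn
    induction n with
    | zero => simp [chainProd, hA, Matrix.mul_assoc]
    | succ k ih =>
      have hk : k ≤ H := Nat.le_of_succ_le hn
      have hkH : k < H := hn
      calc chainProd d W (k + 2) * A = W (k + 1) * (chainProd d W (k + 1) * A) := by
            simp [chainProd, Matrix.mul_assoc]
        _ = W (k + 1) * ((W k * (W k)ᵀ) * chainProd d W (k + 1)) := by rw [ih hk]
        _ = (W (k + 1) * (W (k + 1))ᵀ) * chainProd d W (k + 2) := by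
            rw [hbal k hkH]; simp [chainProd, Matrix.mul_assoc]
  -- Gram lemma
  have hgram : ∀ k ≤ H, (chainProd d W (k + 1))ᵀ * chainProd d W (k + 1) = A ^ (k + 1) := by
    intro k hk
    induction k with
    | zero => simp [chainProd, hA]
    | succ m ih =>
      have hm : m ≤ H := Nat.le_of_succ_le hk
      have hmH : m < H := hk
      calc (chainProd d W (m + 2))ᵀ * chainProd d W (m + 2)
          = (chainProd d W (m + 1))ᵀ * (((W (m + 1))ᵀ * W (m + 1)) * chainProd d W (m + 1)) := by
            simp [chainProd, Matrix.transpose_mul, Matrix.mul_assoc]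
        _ = (chainProd d W (m + 1))ᵀ * ((W m * (W m)ᵀ) * chainProd d W (m + 1)) := by
            rw [hbal m hmH]
        _ = (chainProd d W (m + 1))ᵀ * (chainProd d W (m + 1) * A) := by rw [← hcomm m hm]
        _ = A ^ (m + 1) * A := by rw [← Matrix.mul_assoc, ih hm]
        _ = A ^ (m + 2) := by rw [← pow_succ]
  have hCA : Cᵀ * C = A ^ (H + 1) := by rw [← hC]; exact hgram H le_rfl
  -- all layers have the same energy
  have henergy : ∀ ℓ ≤ H, frobSq (W ℓ) = Matrix.trace A := by
    intro ℓ hℓ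
    induction ℓ with
    | zero => rw [frobSq_eq_trace]
    | succ m ih =>
      rw [frobSq_eq_trace, ← hbal m hℓ, Matrix.trace_mul_comm, ← frobSq_eq_trace]
      exact ih (Nat.le_of_succ_le hℓ)
  have hL : ∑ ℓ ∈ Finset.range (H + 1), frobSq (W ℓ) = (H + 1 : ℝ) * Matrix.trace A := by
    rw [Finset.sum_congr rfl fun ℓ hℓ => henergy ℓ (Nat.lt_succ_iff.mp (Finset.mem_range.mp hℓ))]
    simp [mul_comm]
  rw [hL]
  congr 1
  -- now: trace A = ∑ eigenvalue^(1/(H+1))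
  set B : Matrix (Fin (d 0)) (Fin (d 0)) ℝ := Cᵀ * C with hBdef
  have hB : B.IsHermitian := Matrix.isHermitian_conjTranspose_mul_self C
  have hApsd : A.PosSemidef := by
    have := Matrix.posSemidef_conjTranspose_mul_self (W 0)
    simpa [hA, Matrix.conjTranspose_eq_transpose_of_trivial] using this
  have hAH : A.IsHermitian := hApsd.1
  have hAsa : IsSelfAdjoint A := hAH
  have g := fun x : ℝ => x ^ ((1 : ℝ) / (H + 1))
  have hgc : Continuous (fun x : ℝ => x ^ ((1 : ℝ) / (H + 1))) :=
    Real.continuous_rpow_const (by positivity)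
  have hcfc1 : cfc (fun x : ℝ => x ^ (H + 1) : ℝ → ℝ) A = A ^ (H + 1) := cfc_pow_id A (H + 1)
  have hcomp : cfc (fun x : ℝ => (x ^ (H + 1)) ^ ((1 : ℝ) / (H + 1))) A
      = cfc (fun x : ℝ => x ^ ((1 : ℝ) / (H + 1))) B := by
    rw [hCA, ← hcfc1]
    exact cfc_comp (fun x : ℝ => x ^ ((1 : ℝ) / (H + 1))) (fun x : ℝ => x ^ (H + 1)) A hAsa
      hgc.continuousOn (by fun_prop)
  have hspec : ∀ x ∈ spectrum ℝ A, (x ^ (H + 1)) ^ ((1 : ℝ) / (H + 1)) = x := by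
    intro x hx
    obtain ⟨i, rfl⟩ := (hAH.spectrum_real_eq_range_eigenvalues ▸ hx)
    have hxnn : (0:ℝ) ≤ hAH.eigenvalues i := hApsd.eigenvalues_nonneg i
    rw [← Real.rpow_natCast _ (H + 1), ← Real.rpow_mul hxnn]
    rw [show ((H + 1 : ℕ) : ℝ) * ((1 : ℝ) / (H + 1)) = 1 by
      push_cast; field_simp]
    exact Real.rpow_one _
  have hid : cfc (fun x : ℝ => (x ^ (H + 1)) ^ ((1 : ℝ) / (H + 1))) A = A := by
    rw [cfc_congr (g := fun x : ℝ => x) hspec, cfc_id' ℝ A]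
  have key : cfc (fun x : ℝ => x ^ ((1 : ℝ) / (H + 1))) B = A := by rw [← hcomp, hid]
  rw [hB.cfc_eq] at key
  have final : A.trace = ∑ i, hB.eigenvalues i ^ ((1 : ℝ) / (H + 1)) := by
    rw [← trace_cfc hB (fun x : ℝ => x ^ ((1 : ℝ) / (H + 1))), key]
  exact final
end

section
/- Among all factorizations C = W_{H+1} W_H ⋯ W₁ of a fixed matrix C ∈ R^{d_y × d_x} through dimensions d_x = d₀, d₁, ..., d_{H+1} = d_y with each d_ℓ ≥ min(d_x, d_y), the minimum of the total energy Σ_{ℓ=1}^{H+1} ‖W_ℓ‖_F² equals (H+1)·Σ_{i} σ_i(C)^{2/(H+1)}, where the sum is over the singular values of C. -/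
open Matrix

theorem Matrix.isHermitian_transpose_mul_self {m n : Type*} [Fintype m]
    (A : Matrix m n ℝ) : (Aᵀ * A).IsHermitian := by
  simpa [Matrix.conjTranspose_eq_transpose_of_trivial] using
    Matrix.isHermitian_conjTranspose_mul_self A

namespace MinEnergyAux
set_option linter.unusedVariables false
variable {n m k r : ℕ}
variable {n : ℕ}

/-- Eigenvector matrix (columns are eigenvectors). -/
noncomputable def eigVec {M : Matrix (Fin n) (Fin n) ℝ} (hM : M.IsHermitian) :
    Matrix (Fin n) (Fin n) ℝ := Matrix.of fun i j => hM.eigenvectorBasis j i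

lemma eigVec_tmul {M : Matrix (Fin n) (Fin n) ℝ} (hM : M.IsHermitian) :
    (eigVec hM)ᵀ * eigVec hM = 1 := by
  have h := hM.eigenvectorBasis.orthonormal
  rw [orthonormal_iff_ite] at h
  ext a b
  have := h a b
  simp only [PiLp.inner_apply, RCLike.inner_apply, starRingEnd_apply, star_trivial] at this
  simp only [Matrix.mul_apply, transpose_apply, eigVec, Matrix.of_apply, one_apply]
  simpa [mul_comm] using this

lemma eigVec_mult {M : Matrix (Fin n) (Fin n) ℝ} (hM : M.IsHermitian) :
    (eigVec hM) * (eigVec hM)ᵀ = 1 :=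
  mul_eq_one_comm.mp (eigVec_tmul hM)

lemma mul_eigVec {M : Matrix (Fin n) (Fin n) ℝ} (hM : M.IsHermitian) :
    M * eigVec hM = eigVec hM * diagonal hM.eigenvalues := by
  ext i j
  have h := congrFun (hM.mulVec_eigenvectorBasis j) i
  simp only [mulVec, dotProduct, Pi.smul_apply, smul_eq_mul] at h
  simp only [Matrix.mul_apply, eigVec, Matrix.of_apply, diagonal_apply, mul_ite, mul_zero]
  rw [Finset.sum_ite_eq' Finset.univ j (fun x => hM.eigenvectorBasis x i * hM.eigenvalues x)]
  simp only [Finset.mem_univ, if_true]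
  rw [mul_comm]
  exact h

lemma spectral {M : Matrix (Fin n) (Fin n) ℝ} (hM : M.IsHermitian) :
    M = eigVec hM * diagonal hM.eigenvalues * (eigVec hM)ᵀ := by
  calc M = M * (eigVec hM * (eigVec hM)ᵀ) := by rw [eigVec_mult, Matrix.mul_one]
  _ = (M * eigVec hM) * (eigVec hM)ᵀ := by rw [Matrix.mul_assoc]
  _ = _ := by rw [mul_eigVec]

lemma trace_eq_sum_eig {M : Matrix (Fin n) (Fin n) ℝ} (hM : M.IsHermitian) :
    M.trace = ∑ i, hM.eigenvalues i := by
  conv_lhs => rw [spectral hM]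
  rw [Matrix.trace_mul_comm, ← Matrix.mul_assoc, eigVec_tmul, Matrix.one_mul, trace_diagonal]


lemma jensen_rpow (w x : Fin n → ℝ) (hw : ∀ i, 0 ≤ w i)
    (hw' : ∑ i, w i = 1) (hx : ∀ i, 0 ≤ x i) {q : ℝ} (hq : 0 < q) (hq1 : q ≤ 1) :
    ∑ i, w i * x i ^ q ≤ (∑ i, w i * x i) ^ q := by
  have h := Real.arith_mean_le_rpow_mean Finset.univ w (fun i => x i ^ q)
    (fun i _ => hw i) hw' (fun i _ => Real.rpow_nonneg (hx i) q)
    (p := 1/q) ((one_le_div hq).mpr hq1)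
  have e1 : ∀ i, (x i ^ q) ^ (1/q : ℝ) = x i := fun i => by
    rw [← Real.rpow_mul (hx i), mul_one_div, div_self hq.ne', Real.rpow_one]
  simp only [e1, one_div_one_div] at h
  exact h

lemma sum_sq_eq_zero {x : Fin n → ℝ} (h : ∑ i, x i ^ 2 = 0) : ∀ i, x i = 0 := by
  intro i
  have := (Finset.sum_eq_zero_iff_of_nonneg (fun j _ => sq_nonneg (x j))).mp h i
    (Finset.mem_univ i)
  exact pow_eq_zero_iff (two_ne_zero) |>.mp this

/-- Schur-Horn-type concavity: for PSD `M` and orthogonal `V`,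
`Σ λᵢ(M)^q ≤ Σⱼ (VᵀMV)ⱼⱼ^q` for `0 < q ≤ 1`. -/
lemma sum_eig_rpow_le {M : Matrix (Fin n) (Fin n) ℝ} (hM : M.PosSemidef)
    (V : Matrix (Fin n) (Fin n) ℝ) (hV : Vᵀ * V = 1) {q : ℝ} (hq : 0 < q) (hq1 : q ≤ 1) :
    ∑ i, (hM.1.eigenvalues i) ^ q ≤ ∑ j, ((Vᵀ * M * V) j j) ^ q := by
  set U := eigVec hM.1 with hU
  have hVVt : V * Vᵀ = 1 := mul_eq_one_comm.mp hV
  set W := Vᵀ * U with hWdef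
  have hWtW : Wᵀ * W = 1 := by
    rw [hWdef, transpose_mul, transpose_transpose, Matrix.mul_assoc, ← Matrix.mul_assoc V,
      hVVt, Matrix.one_mul, eigVec_tmul]
  have hWWt : W * Wᵀ = 1 := mul_eq_one_comm.mp hWtW
  have hdiag : Vᵀ * M * V = W * diagonal hM.1.eigenvalues * Wᵀ := by
    conv_lhs => rw [spectral hM.1]
    rw [hWdef]
    simp only [transpose_mul, transpose_transpose, Matrix.mul_assoc]
    rfl
  have hentry : ∀ j, (Vᵀ * M * V) j j = ∑ i, (W j i) ^ 2 * hM.1.eigenvalues i := by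
    intro j
    rw [hdiag]
    simp only [Matrix.mul_apply, transpose_apply, diagonal_apply, mul_ite, mul_zero,
      ite_mul, zero_mul]
    simp only [Finset.sum_ite_eq', Finset.mem_univ, if_true]
    exact Finset.sum_congr rfl fun x _ => by ring
  have hrow : ∀ j, ∑ i, (W j i) ^ 2 = 1 := by
    intro j
    have := congrFun (congrFun hWWt j) j
    simp only [Matrix.mul_apply, transpose_apply, one_apply_eq] at this
    simpa [sq] using this
  have hcol : ∀ i, ∑ j, (W j i) ^ 2 = 1 := by
    intro i
    have := congrFun (congrFun hWtW i) i
    simp only [Matrix.mul_apply, transpose_apply, one_apply_eq] at this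
    simpa [sq] using this
  calc ∑ i, (hM.1.eigenvalues i) ^ q
      = ∑ i, (∑ j, (W j i) ^ 2) * (hM.1.eigenvalues i) ^ q := by
        simp only [hcol, one_mul]
    _ = ∑ j, ∑ i, (W j i) ^ 2 * (hM.1.eigenvalues i) ^ q := by
        rw [Finset.sum_comm]
        simp [Finset.sum_mul]
    _ ≤ ∑ j, (∑ i, (W j i) ^ 2 * hM.1.eigenvalues i) ^ q := by
        refine Finset.sum_le_sum fun j _ => ?_
        exact jensen_rpow _ _ (fun i => sq_nonneg _) (hrow j)
          (fun i => hM.eigenvalues_nonneg i) hq hq1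
    _ = ∑ j, ((Vᵀ * M * V) j j) ^ q := by
        refine Finset.sum_congr rfl fun j _ => ?_
        rw [hentry j]


lemma frobSq_nonneg (A : Matrix (Fin m) (Fin n) ℝ) : 0 ≤ frobSq A :=
  Finset.sum_nonneg fun i _ => Finset.sum_nonneg fun j _ => sq_nonneg _

lemma frobSq_eq_trace (A : Matrix (Fin m) (Fin n) ℝ) : frobSq A = (Aᵀ * A).trace := by
  simp only [frobSq, Matrix.trace, Matrix.diag, Matrix.mul_apply, transpose_apply, sq]
  exact Finset.sum_comm

lemma frobSq_eq_zero {A : Matrix (Fin m) (Fin n) ℝ} (h : frobSq A = 0) : A = 0 := by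
  ext i j
  have hi : ∑ j, (A i j) ^ 2 = 0 := by
    have := (Finset.sum_eq_zero_iff_of_nonneg (fun i _ =>
      Finset.sum_nonneg fun j _ => sq_nonneg (A i j))).mp h i (Finset.mem_univ i)
    exact this
  have := (Finset.sum_eq_zero_iff_of_nonneg (fun j _ => sq_nonneg (A i j))).mp hi j
    (Finset.mem_univ j)
  simpa using pow_eq_zero_iff two_ne_zero |>.mp this

/-- If `UᵀU` is a 0/1 diagonal, then `frobSq (A * U) ≤ frobSq A`. -/
lemma frobSq_mul_le (A : Matrix (Fin m) (Fin k) ℝ) (U : Matrix (Fin k) (Fin r) ℝ)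
    (e : Fin r → ℝ) (hU : Uᵀ * U = diagonal e) (he : ∀ j, e j = 0 ∨ e j = 1) :
    frobSq (A * U) ≤ frobSq A := by
  have hUe : U * diagonal e = U := by
    ext x j
    rw [mul_diagonal]
    rcases he j with h0 | h1
    · have hd : (Uᵀ * U) j j = 0 := by rw [hU, diagonal_apply_eq, h0]
      have hcol : ∀ y, U y j = 0 := by
        apply sum_sq_eq_zero
        simpa [Matrix.mul_apply, sq] using hd
      simp [hcol x, h0]
    · rw [h1, mul_one]
  set P := U * Uᵀ with hPdef
  have hPt : Pᵀ = P := by rw [hPdef, transpose_mul, transpose_transpose]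
  have hPP : P * P = P := by
    rw [hPdef, Matrix.mul_assoc, ← Matrix.mul_assoc Uᵀ, hU, ← Matrix.mul_assoc, hUe]
  have key : frobSq A = frobSq (A * U) + frobSq (A - A * P) := by
    rw [frobSq_eq_trace, frobSq_eq_trace, frobSq_eq_trace]
    have h1 : ((A * U)ᵀ * (A * U)).trace = (Aᵀ * A * P).trace := by
      rw [transpose_mul, Matrix.mul_assoc, Matrix.trace_mul_comm, hPdef]
      simp only [Matrix.mul_assoc]
    have h2 : ((A - A * P)ᵀ * (A - A * P)).trace
        = (Aᵀ * A).trace - (Aᵀ * A * P).trace := by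
      rw [transpose_sub, Matrix.sub_mul, Matrix.mul_sub, Matrix.mul_sub, transpose_mul]
      rw [Matrix.trace_sub, Matrix.trace_sub, Matrix.trace_sub]
      have e1 : (Aᵀ * (A * P)).trace = (Aᵀ * A * P).trace := by rw [Matrix.mul_assoc]
      have e2 : (Pᵀ * Aᵀ * A).trace = (Aᵀ * A * P).trace := by
        rw [hPt, Matrix.mul_assoc, Matrix.trace_mul_comm, ← Matrix.mul_assoc]
      have e3 : (Pᵀ * Aᵀ * (A * P)).trace = (Aᵀ * A * P).trace := by
        rw [hPt, Matrix.mul_assoc, Matrix.trace_mul_comm]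
        rw [show Aᵀ * (A * P) * P = Aᵀ * A * (P * P) by simp only [Matrix.mul_assoc], hPP,
          ← Matrix.mul_assoc]
      rw [e1, e2, e3]
      ring
    rw [h1, h2]
    ring
  have := frobSq_nonneg (A - A * P)
  linarith [key]

lemma psd_tmul {a b : ℕ} (A : Matrix (Fin a) (Fin b) ℝ) : (Aᵀ * A).PosSemidef := by
  have := Matrix.posSemidef_conjTranspose_mul_self A
  simpa [Matrix.conjTranspose_eq_transpose_of_trivial] using this

/-- Key step: `(n+1)·Σ σᵢ(AB)^{2/(n+1)} ≤ ‖A‖² + n·Σ σᵢ(B)^{2/n}`. -/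
lemma step {a b c : ℕ} (n : ℕ) (hn : 1 ≤ n) (A : Matrix (Fin a) (Fin b) ℝ)
    (B : Matrix (Fin b) (Fin c) ℝ) :
    ((n : ℝ) + 1) * ∑ i, ((Matrix.isHermitian_transpose_mul_self (A * B)).eigenvalues i)
        ^ ((1 : ℝ) / (n + 1))
      ≤ frobSq A + (n : ℝ) * ∑ i, ((Matrix.isHermitian_transpose_mul_self B).eigenvalues i)
        ^ ((1 : ℝ) / n) := by
  have hn0 : (0:ℝ) < (n:ℝ) := by exact_mod_cast hn
  have hn1 : (0:ℝ) < (n:ℝ) + 1 := by linarith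
  set q : ℝ := 1 / ((n:ℝ) + 1) with hqdef
  have hq : 0 < q := by positivity
  have hq1 : q ≤ 1 := by rw [hqdef, div_le_one hn1]; linarith
  have hq' : 0 ≤ 1 - q := by
    have : q ≤ 1 := hq1
    linarith
  set hB := Matrix.isHermitian_transpose_mul_self B
  set β := hB.eigenvalues with hβdef
  have hβ0 : ∀ j, 0 ≤ β j := fun j => (psd_tmul B).eigenvalues_nonneg j
  set V := eigVec hB with hVdef
  have hVtV : Vᵀ * V = 1 := eigVec_tmul hB
  have hconj : Vᵀ * (Bᵀ * B) * V = diagonal β := by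
    show Vᵀ * (Bᵀ * B) * V = diagonal β
    rw [Matrix.mul_assoc, (mul_eigVec hB : Bᵀ * B * V = V * diagonal β), ← Matrix.mul_assoc, hVtV, Matrix.one_mul]
  set G : Matrix (Fin a) (Fin c) ℝ := A * (B * V) with hGdef
  set γ : Fin c → ℝ := fun j => ∑ x, (G x j) ^ 2 with hγdef
  have hγ0 : ∀ j, 0 ≤ γ j := fun j => Finset.sum_nonneg fun x _ => sq_nonneg _
  have hCI : ∑ i, ((Matrix.isHermitian_transpose_mul_self (A * B)).eigenvalues i) ^ q
      ≤ ∑ j, (γ j) ^ q := by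
    have h := sum_eig_rpow_le (psd_tmul (A * B)) V hVtV hq hq1
    have hGG : Vᵀ * ((A * B)ᵀ * (A * B)) * V = Gᵀ * G := by
      rw [hGdef]
      simp only [transpose_mul, Matrix.mul_assoc]
    have hdiagG : ∀ j, (Vᵀ * ((A * B)ᵀ * (A * B)) * V) j j = γ j := by
      intro j
      rw [hGG, hγdef]
      simp [Matrix.mul_apply, sq]
    calc ∑ i, ((Matrix.isHermitian_transpose_mul_self (A * B)).eigenvalues i) ^ q
        ≤ ∑ j, ((Vᵀ * ((A * B)ᵀ * (A * B)) * V) j j) ^ q := h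
      _ = ∑ j, (γ j) ^ q := Finset.sum_congr rfl fun j _ => by rw [hdiagG j]
  -- column norms of B*V are β
  have hBVmat : (B * V)ᵀ * (B * V) = diagonal β := by
    rw [← hconj, transpose_mul]
    simp only [Matrix.mul_assoc]
  have hBV : ∀ j, ∑ x, ((B * V) x j) ^ 2 = β j := by
    intro j
    have h := congrFun (congrFun hBVmat j) j
    rw [diagonal_apply_eq] at h
    rw [← h]
    simp only [Matrix.mul_apply, transpose_apply, sq]
  -- normalized columns
  set t : Fin c → ℝ := fun j => if β j = 0 then 0 else (Real.sqrt (β j))⁻¹ with htdef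
  set U : Matrix (Fin b) (Fin c) ℝ := (B * V) * diagonal t with hUdef
  have hUtU : Uᵀ * U = diagonal (fun j => if β j = 0 then 0 else 1) := by
    rw [hUdef, transpose_mul, diagonal_transpose, Matrix.mul_assoc, ← Matrix.mul_assoc (B*V)ᵀ,
      hBVmat, diagonal_mul_diagonal, diagonal_mul_diagonal]
    refine congrArg Matrix.diagonal (funext fun j => ?_)
    simp only [htdef]
    by_cases h0 : β j = 0
    · simp [h0]
    · have hpos : 0 < β j := lt_of_le_of_ne (hβ0 j) (Ne.symm h0)
      have hsne : Real.sqrt (β j) ≠ 0 := (Real.sqrt_pos.mpr hpos).ne'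
      simp only [h0, if_false]
      field_simp
      rw [Real.sq_sqrt (hβ0 j)]
  have hAU : A * U = G * diagonal t := by
    rw [hUdef, hGdef]
    simp only [Matrix.mul_assoc]
  set cc : Fin c → ℝ := fun j => (t j)^2 * γ j with hccdef
  have hsumc : ∑ j, cc j ≤ frobSq A := by
    have h1 : frobSq (A * U) = ∑ j, cc j := by
      rw [frobSq, Finset.sum_comm]
      refine Finset.sum_congr rfl fun j _ => ?_
      simp only [hAU, mul_diagonal, hccdef, hγdef]
      rw [Finset.mul_sum]
      exact Finset.sum_congr rfl fun x _ => by ring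
    rw [← h1]
    exact frobSq_mul_le A U _ hUtU (fun j => by by_cases h : β j = 0 <;> simp [h])
  set T : ℝ := ∑ j, (β j) ^ ((1:ℝ)/n) with hTdef
  have hperj : ∀ j, (γ j) ^ q ≤ q * cc j + (1 - q) * (β j) ^ ((1:ℝ)/n) := by
    intro j
    by_cases h0 : β j = 0
    · have hcol : ∀ x, (B * V) x j = 0 := sum_sq_eq_zero (by rw [hBV j, h0])
      have hGcol : ∀ x, G x j = 0 := by
        intro x
        rw [hGdef]
        simp [Matrix.mul_apply, hcol]
      have hγj : γ j = 0 := by simp [hγdef, hGcol]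
      have hn' : ((1:ℝ)/n) ≠ 0 := by positivity
      rw [hγj, h0, Real.zero_rpow hq.ne', Real.zero_rpow hn']
      simp [hccdef, hγj]
    · have hpos : 0 < β j := lt_of_le_of_ne (hβ0 j) (Ne.symm h0)
      have hx : 0 ≤ (t j)^2 * γ j := mul_nonneg (sq_nonneg _) (hγ0 j)
      have hy : 0 ≤ (β j) ^ ((1:ℝ)/n) := Real.rpow_nonneg (hβ0 j) _
      have amgm := Real.geom_mean_le_arith_mean2_weighted hq.le hq' hx hy (by ring)
      have ht2 : (t j)^2 = (β j)⁻¹ := by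
        simp only [htdef, h0, if_false]
        rw [inv_pow, Real.sq_sqrt (hβ0 j)]
      have hexp : ((1:ℝ)/n) * (1-q) = q := by
        rw [hqdef]
        field_simp
        ring
      have h5 : ((β j) ^ ((1:ℝ)/n)) ^ (1-q) = (β j) ^ q := by
        rw [← Real.rpow_mul (hβ0 j), hexp]
      have h6 : ((t j)^2 * γ j) ^ q * ((β j) ^ ((1:ℝ)/n)) ^ (1-q) = (γ j) ^ q := by
        rw [h5, ht2, ← Real.mul_rpow (mul_nonneg (inv_nonneg.mpr (hβ0 j)) (hγ0 j)) (hβ0 j)]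
        congr 1
        field_simp
      calc (γ j) ^ q = ((t j)^2 * γ j) ^ q * ((β j) ^ ((1:ℝ)/n)) ^ (1-q) := h6.symm
        _ ≤ q * ((t j)^2 * γ j) + (1-q) * ((β j) ^ ((1:ℝ)/n)) := amgm
        _ = q * cc j + (1-q) * (β j) ^ ((1:ℝ)/n) := by rw [hccdef]
  have hsum : ∑ j, (γ j) ^ q ≤ q * frobSq A + (1 - q) * T := by
    calc ∑ j, (γ j) ^ q ≤ ∑ j, (q * cc j + (1 - q) * (β j) ^ ((1:ℝ)/n)) :=
          Finset.sum_le_sum fun j _ => hperj j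
      _ = q * (∑ j, cc j) + (1 - q) * T := by
          rw [Finset.sum_add_distrib, ← Finset.mul_sum, ← Finset.mul_sum, hTdef]
      _ ≤ q * frobSq A + (1 - q) * T := by
          have := mul_le_mul_of_nonneg_left hsumc hq.le
          linarith
  have hS : ∑ i, ((Matrix.isHermitian_transpose_mul_self (A * B)).eigenvalues i) ^ q
      ≤ q * frobSq A + (1 - q) * T := le_trans hCI hsum
  have h1 : ((n:ℝ)+1) * q = 1 := by rw [hqdef]; field_simp
  have h2 : ((n:ℝ)+1) * (1-q) = n := by rw [hqdef]; field_simp; ring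
  calc ((n : ℝ) + 1) * ∑ i, ((Matrix.isHermitian_transpose_mul_self (A * B)).eigenvalues i)
        ^ ((1 : ℝ) / (n + 1))
      ≤ ((n:ℝ)+1) * (q * frobSq A + (1 - q) * T) := by
        apply mul_le_mul_of_nonneg_left _ hn1.le
        exact hS
    _ = (((n:ℝ)+1) * q) * frobSq A + (((n:ℝ)+1) * (1-q)) * T := by ring
    _ = frobSq A + (n:ℝ) * T := by rw [h1, h2, one_mul]
lemma lower_bound (d : ℕ → ℕ) (W : ∀ ℓ, Matrix (Fin (d (ℓ + 1))) (Fin (d ℓ)) ℝ) :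
    ∀ n : ℕ, 1 ≤ n →
      (n : ℝ) * ∑ i, ((Matrix.isHermitian_transpose_mul_self (chainProd d W n)).eigenvalues i)
          ^ ((1:ℝ)/n)
        ≤ ∑ ℓ ∈ Finset.range n, frobSq (W ℓ) := by
  intro n
  induction n with
  | zero => omega
  | succ m ih =>
    intro _
    rcases Nat.eq_zero_or_pos m with hm | hm
    · subst hm
      have hc : chainProd d W 1 = W 0 := by
        show W 0 * chainProd d W 0 = W 0
        show W 0 * 1 = W 0
        rw [Matrix.mul_one]
      rw [hc, Finset.sum_range_one]
      norm_num
      refine le_of_eq ?_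
      calc ∑ i, ((Matrix.isHermitian_transpose_mul_self (W 0)).eigenvalues i)
          = ((W 0)ᴴ * (W 0)).trace := (trace_eq_sum_eig _).symm
        _ = frobSq (W 0) := (frobSq_eq_trace (W 0)).symm
    · have hc : chainProd d W (m + 1) = W m * chainProd d W m := rfl
      have hstep := step m hm (W m) (chainProd d W m)
      have hih := ih hm
      rw [Finset.sum_range_succ]
      calc ((m + 1 : ℕ) : ℝ) *
            ∑ i, ((Matrix.isHermitian_transpose_mul_self (chainProd d W (m+1))).eigenvalues i)
              ^ ((1:ℝ)/(m+1 : ℕ))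
          = ((m:ℝ) + 1) *
            ∑ i, ((Matrix.isHermitian_transpose_mul_self (W m * chainProd d W m)).eigenvalues i)
              ^ ((1:ℝ)/((m:ℝ)+1)) := by rw [hc]; push_cast; ring_nf
        _ ≤ frobSq (W m) + (m:ℝ) *
            ∑ i, ((Matrix.isHermitian_transpose_mul_self (chainProd d W m)).eigenvalues i)
              ^ ((1:ℝ)/m) := hstep
        _ ≤ (∑ ℓ ∈ Finset.range m, frobSq (W ℓ)) + frobSq (W m) := by linarith
/-- Rectangular 0/1 embedding matrix. -/
def emb (k m : ℕ) : Matrix (Fin m) (Fin k) ℝ :=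
  Matrix.of fun i a => if (i : ℕ) = (a : ℕ) then 1 else 0

lemma embT_mul_emb {k m : ℕ} (h : k ≤ m) : (emb k m)ᵀ * emb k m = 1 := by
  ext a b
  rw [Matrix.mul_apply]
  rw [Finset.sum_eq_single (⟨(a : ℕ), lt_of_lt_of_le a.2 h⟩ : Fin m)]
  · simp only [transpose_apply, emb, Matrix.of_apply, one_apply]
    by_cases hab : a = b
    · simp [hab]
    · have h2 : ¬ ((a : ℕ) = (b : ℕ)) := fun e => hab (Fin.ext e)
      simp [h2, hab]
  · intro i _ hne
    have h2 : ¬ ((i : ℕ) = (a : ℕ)) := fun e => hne (Fin.ext e)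
    simp only [transpose_apply, emb, Matrix.of_apply, h2, if_false, zero_mul]
  · intro hmem
    exact absurd (Finset.mem_univ _) hmem

lemma frobSq_mul_rowortho {k m p : ℕ} (M : Matrix (Fin p) (Fin k) ℝ)
    (R : Matrix (Fin k) (Fin m) ℝ) (hR : R * Rᵀ = 1) : frobSq (M * R) = frobSq M := by
  rw [frobSq_eq_trace, frobSq_eq_trace, transpose_mul, Matrix.mul_assoc, Matrix.trace_mul_comm]
  rw [show Mᵀ * (M * R) * Rᵀ = Mᵀ * M * (R * Rᵀ) by simp only [Matrix.mul_assoc], hR,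
    Matrix.mul_one]

lemma frobSq_ortho_mul {k m p : ℕ} (L : Matrix (Fin m) (Fin k) ℝ) (hL : Lᵀ * L = 1)
    (N : Matrix (Fin k) (Fin p) ℝ) : frobSq (L * N) = frobSq N := by
  rw [frobSq_eq_trace, frobSq_eq_trace, transpose_mul]
  rw [show Nᵀ * Lᵀ * (L * N) = Nᵀ * (Lᵀ * L * N) by simp only [Matrix.mul_assoc], hL,
    Matrix.one_mul]

lemma frobSq_diagonal {k : ℕ} (s : Fin k → ℝ) : frobSq (diagonal s) = ∑ a, (s a) ^ 2 := by
  unfold frobSq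
  refine Finset.sum_congr rfl fun i _ => ?_
  rw [Finset.sum_eq_single i]
  · rw [diagonal_apply_eq]
  · intro j _ hne
    rw [diagonal_apply_ne' _ hne]
    exact zero_pow two_ne_zero
  · intro h; exact absurd (Finset.mem_univ _) h
lemma mem_part (H : ℕ) (d : ℕ → ℕ)
    (hd : ∀ ℓ ≤ H + 1, min (d 0) (d (H + 1)) ≤ d ℓ)
    (C : Matrix (Fin (d (H + 1))) (Fin (d 0)) ℝ) :
    ∃ W : ∀ ℓ, Matrix (Fin (d (ℓ + 1))) (Fin (d ℓ)) ℝ,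
      chainProd d W (H + 1) = C ∧
      ((H + 1 : ℝ) * ∑ i, ((Matrix.isHermitian_transpose_mul_self C).eigenvalues i) ^
          ((1 : ℝ) / (H + 1)))
        = ∑ ℓ ∈ Finset.range (H + 1), frobSq (W ℓ) := by
  classical
  set hC := Matrix.isHermitian_transpose_mul_self C with hhC
  set lam : Fin (d 0) → ℝ := hC.eigenvalues with hlam
  have hlam0 : ∀ i, 0 ≤ lam i := fun i => (psd_tmul C).eigenvalues_nonneg i
  set V : Matrix (Fin (d 0)) (Fin (d 0)) ℝ := eigVec hC with hV
  set S : Finset (Fin (d 0)) := Finset.univ.filter (fun i => lam i ≠ 0) with hS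
  set k := S.card with hk
  -- k is at most the rank, hence at most min (d 0) (d (H+1))
  have hkmin : k ≤ min (d 0) (d (H + 1)) := by
    have h1 : k = Fintype.card {i // lam i ≠ 0} := by
      rw [hk, Fintype.card_subtype]
    have h2 : (Cᵀ * C).rank = Fintype.card {i // lam i ≠ 0} := hC.rank_eq_card_non_zero_eigs
    have h3 : (Cᵀ * C).rank = C.rank := Matrix.rank_transpose_mul_self C
    have h4 : C.rank ≤ d 0 := by
      simpa using Matrix.rank_le_card_width C
    have h5 : C.rank ≤ d (H + 1) := by
      simpa using Matrix.rank_le_card_height C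
    omega
  have hkd : ∀ ℓ ≤ H + 1, k ≤ d ℓ := fun ℓ hℓ => le_trans hkmin (hd ℓ hℓ)
  set g : Fin k → Fin (d 0) := fun a => ((S.orderIsoOfFin rfl) a : Fin (d 0)) with hg
  have hginj : Function.Injective g :=
    Subtype.val_injective.comp (S.orderIsoOfFin rfl).injective
  have hgS : ∀ a, g a ∈ S := fun a => (S.orderIsoOfFin rfl a).2
  have hglamne : ∀ a, lam (g a) ≠ 0 := fun a => (Finset.mem_filter.mp (hgS a)).2
  have hglampos : ∀ a, 0 < lam (g a) :=
    fun a => lt_of_le_of_ne (hlam0 (g a)) (Ne.symm (hglamne a))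
  -- sums over S
  have hsumS : ∀ f : ℝ → ℝ, f 0 = 0 → ∑ a : Fin k, f (lam (g a)) = ∑ i, f (lam i) := by
    intro f hf
    have h1 : ∑ a : Fin k, f (lam (g a)) = ∑ x : S, f (lam x) :=
      Fintype.sum_equiv (S.orderIsoOfFin rfl).toEquiv _ _ (fun a => rfl)
    rw [h1, Finset.sum_coe_sort S (fun i => f (lam i))]
    refine Finset.sum_subset (Finset.subset_univ S) fun i _ hiS => ?_
    have : lam i = 0 := by
      by_contra hne
      exact hiS (Finset.mem_filter.mpr ⟨Finset.mem_univ i, hne⟩)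
    rw [this, hf]
  -- the balanced singular values
  set e : ℝ := 1 / (2 * ((H : ℝ) + 1)) with he
  set s : Fin k → ℝ := fun a => (lam (g a)) ^ e with hs
  have hspos : ∀ a, 0 < s a := fun a => Real.rpow_pos_of_pos (hglampos a) e
  have hs_sq : ∀ a, (s a) ^ 2 = (lam (g a)) ^ ((1:ℝ) / (H + 1)) := by
    intro a
    have hH1 : (H:ℝ) + 1 ≠ 0 := by positivity
    rw [hs, ← Real.rpow_natCast ((lam (g a)) ^ e) 2, ← Real.rpow_mul (hlam0 (g a))]
    congr 1
    rw [he]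
    push_cast
    field_simp
  have hs_pow : ∀ a, (s a) ^ (2 * H + 2) = lam (g a) := by
    intro a
    rw [hs, ← Real.rpow_natCast ((lam (g a)) ^ e) (2 * H + 2), ← Real.rpow_mul (hlam0 (g a))]
    rw [show e * ((2 * H + 2 : ℕ) : ℝ) = 1 by
      have hH1 : (H:ℝ) + 1 ≠ 0 := by positivity
      rw [he]; push_cast; field_simp]
    exact Real.rpow_one _
  -- Q: selected eigenvector rows
  set Q : Matrix (Fin k) (Fin (d 0)) ℝ := Vᵀ.submatrix g id with hQ
  have hQQt : Q * Qᵀ = 1 := by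
    ext a b
    have h := congrFun (congrFun (eigVec_tmul hC) (g a)) (g b)
    simp only [Matrix.mul_apply, transpose_apply] at h ⊢
    simp only [hQ, Matrix.submatrix_apply, transpose_apply, id]
    rw [show ∑ x, V x (g a) * V x (g b) = (1 : Matrix _ _ ℝ) (g a) (g b) from h]
    by_cases hab : a = b
    · subst hab
      rw [one_apply_eq, one_apply_eq]
    · rw [one_apply_ne (fun hcon => hab (hginj hcon)), one_apply_ne hab]
  have hCQt : (Cᵀ * C) * Qᵀ = Qᵀ * diagonal (fun a => lam (g a)) := by
    have hme : (Cᵀ * C) * V = V * diagonal lam := by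
      show (Cᴴ * C) * V = V * diagonal lam
      exact mul_eigVec hC
    ext x a
    have h := congrFun (congrFun hme x) (g a)
    simp only [Matrix.mul_apply, transpose_apply] at h
    simp only [Matrix.mul_apply, hQ, transpose_submatrix, transpose_transpose,
      Matrix.submatrix_apply, transpose_apply, id_eq]
    rw [h]
    rw [Finset.sum_eq_single (g a), Finset.sum_eq_single a]
    · rw [diagonal_apply_eq, diagonal_apply_eq]
    · intro b _ hba
      rw [diagonal_apply_ne _ hba, mul_zero]
    · intro h'; exact absurd (Finset.mem_univ _) h'
    · intro j _ hja
      rw [diagonal_apply_ne _ hja, mul_zero]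
    · intro h'; exact absurd (Finset.mem_univ _) h'
  have htraceL : (Cᵀ * C).trace = ∑ i, lam i := by
    show (Cᴴ * C).trace = ∑ i, lam i
    exact trace_eq_sum_eig hC
  have hQtQsym : (Qᵀ * Q)ᵀ = Qᵀ * Q := by rw [transpose_mul, transpose_transpose]
  set D1 := Qᵀ * diagonal (fun a => lam (g a)) * Q with hD1
  have hT1 : (Cᵀ * C) * (Qᵀ * Q) = D1 := by
    rw [← Matrix.mul_assoc, hCQt, hD1]
  have hsymC : (Cᵀ * C)ᵀ = Cᵀ * C := by rw [transpose_mul, transpose_transpose]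
  have hT2 : (Qᵀ * Q) * (Cᵀ * C) = D1 := by
    have h := congrArg Matrix.transpose hT1
    rw [transpose_mul, hQtQsym, hsymC, hD1, transpose_mul, transpose_mul, diagonal_transpose,
      transpose_transpose] at h
    rw [h, hD1]
    simp only [Matrix.mul_assoc]
  have hXD1 : (Qᵀ * Q) * D1 = D1 := by
    rw [hD1]
    calc (Qᵀ * Q) * (Qᵀ * diagonal (fun a => lam (g a)) * Q)
        = Qᵀ * ((Q * Qᵀ) * (diagonal (fun a => lam (g a)) * Q)) := by
          simp only [Matrix.mul_assoc]
      _ = Qᵀ * diagonal (fun a => lam (g a)) * Q := by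
          rw [hQQt, Matrix.one_mul, Matrix.mul_assoc]
  have htrD1 : D1.trace = ∑ i, lam i := by
    rw [hD1, Matrix.trace_mul_comm, ← Matrix.mul_assoc, hQQt, Matrix.one_mul, trace_diagonal]
    simpa using hsumS id rfl
  have hCQ : C * (Qᵀ * Q) = C := by
    have h1 : Cᵀ * (C * (Qᵀ * Q)) = D1 := by rw [← Matrix.mul_assoc, hT1]
    have h3 : (Qᵀ * Q) * (Cᵀ * (C * (Qᵀ * Q))) = D1 := by rw [h1, hXD1]
    have hZ : C - C * (Qᵀ * Q) = 0 := by
      apply frobSq_eq_zero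
      rw [frobSq_eq_trace]
      have hexp : (C - C * (Qᵀ * Q))ᵀ * (C - C * (Qᵀ * Q))
          = Cᵀ * C - Cᵀ * (C * (Qᵀ * Q)) -
            ((Qᵀ * Q) * (Cᵀ * C) - (Qᵀ * Q) * (Cᵀ * (C * (Qᵀ * Q)))) := by
        rw [transpose_sub, transpose_mul, hQtQsym, Matrix.sub_mul, Matrix.mul_sub,
          Matrix.mul_sub]
        simp only [Matrix.mul_assoc]
      rw [hexp, hT2, h3, h1]
      rw [show Cᵀ * C - D1 - (D1 - D1) = Cᵀ * C - D1 by abel]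
      rw [Matrix.trace_sub, htraceL, htrD1, sub_self]
    have := sub_eq_zero.mp hZ
    exact this.symm
  -- the factor chain
  set Dinv : Matrix (Fin k) (Fin k) ℝ := diagonal (fun a => (s a ^ H)⁻¹) with hDinv
  set R : ∀ ℓ, Matrix (Fin k) (Fin (d ℓ)) ℝ := fun ℓ => match ℓ with
    | 0 => Q
    | (m+1) => (emb k (d (m+1)))ᵀ with hR
  have hRRt : ∀ ℓ, ℓ ≤ H + 1 → R ℓ * (R ℓ)ᵀ = 1 := by
    intro ℓ hℓ
    match ℓ with
    | 0 => exact hQQt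
    | (m+1) =>
      show (emb k (d (m+1)))ᵀ * (emb k (d (m+1)))ᵀᵀ = 1
      rw [transpose_transpose]
      exact embT_mul_emb (hkd (m+1) hℓ)
  set TOP : Matrix (Fin (d (H+1))) (Fin (d H)) ℝ := C * Qᵀ * Dinv * R H with hTOP
  set W : ∀ ℓ, Matrix (Fin (d (ℓ+1))) (Fin (d ℓ)) ℝ := fun ℓ =>
    if h : ℓ = H then
      TOP.submatrix (Fin.cast (by rw [h])) (Fin.cast (by rw [h]))
    else emb k (d (ℓ+1)) * diagonal s * R ℓ with hW
  have hWH : W H = TOP := by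
    show dite _ _ _ = _
    rw [dif_pos rfl]
    rfl
  have hWl : ∀ ℓ, ℓ ≠ H → W ℓ = emb k (d (ℓ+1)) * diagonal s * R ℓ := by
    intro ℓ hℓ
    show dite _ _ _ = _
    rw [dif_neg hℓ]
  refine ⟨W, ?_, ?_⟩
  · -- chainProd d W (H+1) = C
    have hchain : ∀ n : ℕ, 1 ≤ n → n ≤ H →
        chainProd d W n = emb k (d n) * diagonal (fun a => s a ^ n) * Q := by
      intro n
      induction n with
      | zero => omega
      | succ m ih =>
        intro _ hle
        rcases Nat.eq_zero_or_pos m with hm | hm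
        · subst hm
          have h0H : (0:ℕ) ≠ H := by omega
          have h1 : chainProd d W 1 = W 0 := by
            show W 0 * 1 = W 0
            rw [Matrix.mul_one]
          rw [h1, hWl 0 h0H,
            show (fun a => s a ^ (0 + 1)) = s from funext fun a => pow_one _]
        · obtain ⟨m', rfl⟩ : ∃ m', m = m' + 1 := ⟨m - 1, by omega⟩
          have hmH : m' + 1 ≠ H := by omega
          have hstep : chainProd d W (m' + 1 + 1) = W (m' + 1) * chainProd d W (m' + 1) := rfl
          rw [hstep, ih hm (by omega), hWl _ hmH]
          show emb k (d (m' + 1 + 1)) * diagonal s * (emb k (d (m' + 1)))ᵀ *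
              (emb k (d (m' + 1)) * diagonal (fun a => s a ^ (m' + 1)) * Q) = _
          calc emb k (d (m' + 1 + 1)) * diagonal s * (emb k (d (m' + 1)))ᵀ *
              (emb k (d (m' + 1)) * diagonal (fun a => s a ^ (m' + 1)) * Q)
              = emb k (d (m' + 1 + 1)) * diagonal s *
                (((emb k (d (m' + 1)))ᵀ * emb k (d (m' + 1))) *
                  (diagonal (fun a => s a ^ (m' + 1)) * Q)) := by
                simp only [Matrix.mul_assoc]
            _ = emb k (d (m' + 1 + 1)) *
                (diagonal s * diagonal (fun a => s a ^ (m' + 1))) * Q := by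
                rw [embT_mul_emb (hkd (m' + 1) (by omega)), Matrix.one_mul]
                simp only [Matrix.mul_assoc]
            _ = emb k (d (m' + 1 + 1)) * diagonal (fun a => s a ^ (m' + 1 + 1)) * Q := by
                rw [diagonal_mul_diagonal,
                  show (fun i => s i * s i ^ (m' + 1)) = fun a => s a ^ (m' + 1 + 1) from
                    funext fun a => (pow_succ' _ _).symm]
    have hDinvdiag : ∀ n : ℕ, Dinv * diagonal (fun a => s a ^ n) =
        diagonal (fun a => (s a ^ H)⁻¹ * s a ^ n) := by
      intro n
      rw [hDinv, diagonal_mul_diagonal]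
    rcases Nat.eq_zero_or_pos H with hH | hH
    · subst hH
      have h1 : chainProd d W 1 = W 0 := by
        show W 0 * 1 = W 0
        rw [Matrix.mul_one]
      rw [h1, hWH, hTOP]
      show C * Qᵀ * Dinv * Q = C
      rw [hDinv]
      rw [show (fun a => (s a ^ 0)⁻¹) = fun _ => (1:ℝ) by funext a; rw [pow_zero, inv_one]]
      rw [diagonal_one, Matrix.mul_one, Matrix.mul_assoc, hCQ]
    · have hstep : chainProd d W (H + 1) = W H * chainProd d W H := rfl
      obtain ⟨H', rfl⟩ : ∃ H', H = H' + 1 := ⟨H - 1, by omega⟩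
      rw [hstep, hchain (H' + 1) hH (le_refl _), hWH, hTOP]
      show C * Qᵀ * Dinv * (emb k (d (H' + 1)))ᵀ *
          (emb k (d (H' + 1)) * diagonal (fun a => s a ^ (H' + 1)) * Q) = C
      calc C * Qᵀ * Dinv * (emb k (d (H' + 1)))ᵀ *
          (emb k (d (H' + 1)) * diagonal (fun a => s a ^ (H' + 1)) * Q)
          = C * Qᵀ * (Dinv * (((emb k (d (H' + 1)))ᵀ * emb k (d (H' + 1))) *
              (diagonal (fun a => s a ^ (H' + 1)) * Q))) := by
            simp only [Matrix.mul_assoc]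
        _ = C * Qᵀ * (Dinv * (diagonal (fun a => s a ^ (H' + 1)) * Q)) := by
            rw [embT_mul_emb (hkd (H' + 1) (by omega)), Matrix.one_mul]
        _ = C * Qᵀ * ((Dinv * diagonal (fun a => s a ^ (H' + 1))) * Q) := by
            simp only [Matrix.mul_assoc]
        _ = C * (Qᵀ * Q) := by
            rw [hDinvdiag]
            rw [show (fun a => (s a ^ (H' + 1))⁻¹ * s a ^ (H' + 1)) = fun _ => (1:ℝ) by
              funext a; rw [inv_mul_cancel₀ (pow_ne_zero _ (hspos a).ne')]]
            rw [diagonal_one, Matrix.one_mul, Matrix.mul_assoc]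
        _ = C := hCQ
  · -- energy
    have hfrobW : ∀ ℓ < H + 1, frobSq (W ℓ) = ∑ a, (s a) ^ 2 := by
      intro ℓ hℓ
      by_cases hlH : ℓ = H
      · subst hlH
        rw [hWH, hTOP, frobSq_mul_rowortho _ _ (hRRt ℓ (by omega))]
        -- frobSq (C * Qᵀ * Dinv)
        rw [frobSq_eq_trace]
        have hQCCQ : Q * (Cᵀ * C) * Qᵀ = diagonal (fun a => lam (g a)) := by
          calc Q * (Cᵀ * C) * Qᵀ = Q * ((Cᵀ * C) * Qᵀ) := by simp only [Matrix.mul_assoc]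
            _ = Q * (Qᵀ * diagonal (fun a => lam (g a))) := by rw [hCQt]
            _ = (Q * Qᵀ) * diagonal (fun a => lam (g a)) := by simp only [Matrix.mul_assoc]
            _ = diagonal (fun a => lam (g a)) := by rw [hQQt, Matrix.one_mul]
        have hexp : (C * Qᵀ * Dinv)ᵀ * (C * Qᵀ * Dinv)
            = Dinv * (Q * (Cᵀ * C) * Qᵀ) * Dinv := by
          have hDt : Dinvᵀ = Dinv := by rw [hDinv, diagonal_transpose]
          rw [transpose_mul, transpose_mul, hDt, transpose_transpose]
          simp only [Matrix.mul_assoc]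
        rw [hexp, hQCCQ, hDinv, diagonal_mul_diagonal, diagonal_mul_diagonal, trace_diagonal]
        refine Finset.sum_congr rfl fun a _ => ?_
        have hsne : s a ≠ 0 := (hspos a).ne'
        have hp := hs_pow a
        field_simp
        rw [← hp]
        ring
      · rw [hWl ℓ hlH]
        have hlle : ℓ + 1 ≤ H + 1 := by omega
        rw [frobSq_mul_rowortho _ _ (hRRt ℓ (by omega)),
          frobSq_ortho_mul _ (embT_mul_emb (hkd (ℓ+1) hlle)) _, frobSq_diagonal]
    calc ((H:ℝ) + 1) * ∑ i, (lam i) ^ ((1 : ℝ) / ((H:ℝ) + 1))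
        = ((H:ℝ) + 1) * ∑ a, (s a) ^ 2 := by
          congr 1
          rw [← hsumS (fun x => x ^ ((1 : ℝ) / ((H:ℝ) + 1)))
            (Real.zero_rpow (by positivity))]
          exact (Finset.sum_congr rfl fun a _ => (hs_sq a)).symm
      _ = ∑ ℓ ∈ Finset.range (H + 1), frobSq (W ℓ) := by
          rw [Finset.sum_congr rfl (fun ℓ hℓ => hfrobW ℓ (Finset.mem_range.mp hℓ))]
          rw [Finset.sum_const, Finset.card_range, nsmul_eq_mul]
          push_cast
          ring
end MinEnergyAux

/-- Among all factorizations `C = W_{H+1} ⋯ W₁` through dimensions `d ℓ ≥ min (d 0) (d (H+1))`,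
the minimal total energy `Σ ‖W_ℓ‖_F²` equals `(H+1)·Σ_i σ_i(C)^{2/(H+1)}`, where the sum over
the singular values of `C` is expressed via the eigenvalues of `Cᵀ C`. -/
theorem min_energy_factorization (H : ℕ) (d : ℕ → ℕ)
    (hd : ∀ ℓ ≤ H + 1, min (d 0) (d (H + 1)) ≤ d ℓ)
    (C : Matrix (Fin (d (H + 1))) (Fin (d 0)) ℝ) :
    IsLeast {E : ℝ | ∃ W : ∀ ℓ, Matrix (Fin (d (ℓ + 1))) (Fin (d ℓ)) ℝ,
        chainProd d W (H + 1) = C ∧ E = ∑ ℓ ∈ Finset.range (H + 1), frobSq (W ℓ)}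
      ((H + 1 : ℝ) *
        ∑ i, ((Matrix.isHermitian_transpose_mul_self C).eigenvalues i) ^
          ((1 : ℝ) / (H + 1))) := by
  constructor
  · obtain ⟨W, hWc, hWe⟩ := MinEnergyAux.mem_part H d hd C
    exact ⟨W, hWc, hWe⟩
  · rintro E ⟨W, hWC, rfl⟩
    have h := MinEnergyAux.lower_bound d W (H + 1) (by omega)
    rw [hWC] at h
    push_cast at h
    exact h
end

section
/- Consider the gradient flow dW_ℓ/dt = −∂L/∂W_ℓ for the loss L(W₁,...,W_{H+1}) = (1/m)‖W_{H+1}⋯W₁ B − Y‖_F² with fixed matrices B, Y. Then for every 1 ≤ ℓ ≤ H and all t ≥ 0, d/dt (W_ℓ W_ℓᵀ) = d/dt (W_{ℓ+1}ᵀ W_{ℓ+1}). Consequently, if the initialization is balanced (W_ℓ(0) W_ℓ(0)ᵀ = W_{ℓ+1}(0)ᵀ W_{ℓ+1}(0) for all ℓ), then W(t) is balanced for all t ≥ 0. -/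
open Matrix

/-- Segment product `seg d W a k = W (a+k-1) * ⋯ * W a`. -/
def seg (d : ℕ → ℕ) (W : ∀ ℓ, Matrix (Fin (d (ℓ + 1))) (Fin (d ℓ)) ℝ) (a : ℕ) :
    (k : ℕ) → Matrix (Fin (d (a + k))) (Fin (d a)) ℝ
  | 0 => (1 : Matrix (Fin (d a)) (Fin (d a)) ℝ)
  | k + 1 => W (a + k) * seg d W a k

lemma W_congr' {d : ℕ → ℕ} (V : ∀ ℓ, Matrix (Fin (d (ℓ + 1))) (Fin (d ℓ)) ℝ)
    {p q : ℕ} (h : p = q) (i : Fin (d (p + 1))) (x : Fin (d p)) :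
    V p i x = V q (Fin.cast (by rw [h]) i) (Fin.cast (by rw [h]) x) := by
  subst h; rfl

lemma seg_succ_apply (d : ℕ → ℕ) (V : ∀ ℓ, Matrix (Fin (d (ℓ + 1))) (Fin (d ℓ)) ℝ)
    (a k : ℕ) (i : Fin (d (a + (k + 1)))) (j : Fin (d a)) :
    seg d V a (k + 1) i j =
      (seg d V (a + 1) k * V a) (Fin.cast (congrArg d (Nat.succ_add a k).symm) i) j := by
  induction k with
  | zero =>
      simp [seg]
  | succ k ih =>
      have h1 : seg d V a (k+1+1) = V (a + (k+1)) * seg d V a (k+1) := rfl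
      have h2 : seg d V (a+1) (k+1) = V ((a+1)+k) * seg d V (a+1) k := rfl
      rw [h1, Matrix.mul_apply, h2, Matrix.mul_assoc, Matrix.mul_apply]
      refine Fintype.sum_equiv (finCongr (congrArg d (Nat.succ_add a k))).symm _ _ (fun x => ?_)
      rw [ih]
      congr 1
      exact W_congr' V (Nat.succ_add a k).symm i x

section Key
variable (H nbar : ℕ) (d : ℕ → ℕ)
  (B : Matrix (Fin (d 0)) (Fin nbar) ℝ)
  (Y : Matrix (Fin (d (H + 1))) (Fin nbar) ℝ)

/-- Key matrix identity: G_ℓ W_ℓᵀ = W_{ℓ+1}ᵀ G_{ℓ+1}. -/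
lemma key_identity (V : ∀ ℓ, Matrix (Fin (d (ℓ + 1))) (Fin (d ℓ)) ℝ)
    (ℓ b : ℕ) (h1 : (ℓ + 1) + (b + 1) = H + 1) (h2 : (ℓ + 2) + b = H + 1) :
    ((seg d V (ℓ + 1) (b + 1))ᵀ *
        (chainProd d V (H + 1) * B - Y).submatrix (Fin.cast (congrArg d h1)) id *
        Bᵀ * (chainProd d V ℓ)ᵀ) * (V ℓ)ᵀ =
      (V (ℓ + 1))ᵀ *
        ((seg d V (ℓ + 2) b)ᵀ *
          (chainProd d V (H + 1) * B - Y).submatrix (Fin.cast (congrArg d h2)) id *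
          Bᵀ * (chainProd d V (ℓ + 1))ᵀ) := by
  set E := chainProd d V (H + 1) * B - Y with hE
  have hQ : (chainProd d V ℓ)ᵀ * (V ℓ)ᵀ = (chainProd d V (ℓ + 1))ᵀ := by
    rw [← Matrix.transpose_mul]; rfl
  have hhead : (seg d V (ℓ + 1) (b + 1))ᵀ * E.submatrix (Fin.cast (congrArg d h1)) id =
      (V (ℓ + 1))ᵀ * ((seg d V (ℓ + 2) b)ᵀ * E.submatrix (Fin.cast (congrArg d h2)) id) := by
    rw [← Matrix.mul_assoc, ← Matrix.transpose_mul]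
    ext p q
    rw [Matrix.mul_apply, Matrix.mul_apply]
    refine Fintype.sum_equiv (finCongr (congrArg d
      (show (ℓ + 1) + (b + 1) = (ℓ + 2) + b by omega))) _ _ (fun r => ?_)
    simp only [Matrix.transpose_apply, Matrix.submatrix_apply, id]
    congr 1
    exact seg_succ_apply d V (ℓ + 1) b r p
  calc ((seg d V (ℓ + 1) (b + 1))ᵀ * E.submatrix (Fin.cast (congrArg d h1)) id *
          Bᵀ * (chainProd d V ℓ)ᵀ) * (V ℓ)ᵀ
      = ((seg d V (ℓ + 1) (b + 1))ᵀ * E.submatrix (Fin.cast (congrArg d h1)) id) *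
          Bᵀ * ((chainProd d V ℓ)ᵀ * (V ℓ)ᵀ) := by
        simp only [Matrix.mul_assoc]
    _ = ((V (ℓ + 1))ᵀ * ((seg d V (ℓ + 2) b)ᵀ * E.submatrix (Fin.cast (congrArg d h2)) id)) *
          Bᵀ * (chainProd d V (ℓ + 1))ᵀ := by rw [hhead, hQ]
    _ = _ := by simp only [Matrix.mul_assoc]
end Key

/-- Balancedness is preserved by the gradient flow of the factored least-squares loss
`L(W) = (1/m) ‖W_{H+1} ⋯ W₁ B − Y‖_F²`. -/
theorem gradient_flow_preserves_balancedness
    (H nbar : ℕ) (d : ℕ → ℕ) (m : ℝ) (hm : 0 < m)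
    (B : Matrix (Fin (d 0)) (Fin nbar) ℝ)
    (Y : Matrix (Fin (d (H + 1))) (Fin nbar) ℝ)
    (W : ℝ → ∀ ℓ, Matrix (Fin (d (ℓ + 1))) (Fin (d ℓ)) ℝ)
    -- `W` solves the gradient flow `dW_ℓ/dt = −∂L/∂W_ℓ`, where
    -- `∂L/∂W_ℓ = (2/m) (W_{H+1}⋯W_{ℓ+1})ᵀ (W_{H+1}⋯W₁ B − Y) Bᵀ (W_{ℓ−1}⋯W₁)ᵀ` :
    (hflow : ∀ a b : ℕ, ∀ hab : a + b = H,
      ∀ (i : Fin (d (a + 1))) (j : Fin (d a)) (t : ℝ),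
        HasDerivAt (fun s => W s a i j)
          (-((2 / m) *
            (((seg d (W t) (a + 1) b)ᵀ *
                (chainProd d (W t) (H + 1) * B - Y).submatrix
                  (Fin.cast (congrArg d (show (a + 1) + b = H + 1 by omega))) id *
                Bᵀ * (chainProd d (W t) a)ᵀ) i j))) t) :
    (∀ ℓ < H, ∀ (t : ℝ) (i j : Fin (d (ℓ + 1))),
        deriv (fun s => (W s ℓ * (W s ℓ)ᵀ) i j) t =
          deriv (fun s => ((W s (ℓ + 1))ᵀ * W s (ℓ + 1)) i j) t) ∧
      ((∀ ℓ < H, W 0 ℓ * (W 0 ℓ)ᵀ = (W 0 (ℓ + 1))ᵀ * W 0 (ℓ + 1)) →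
        ∀ t : ℝ, 0 ≤ t →
          ∀ ℓ < H, W t ℓ * (W t ℓ)ᵀ = (W t (ℓ + 1))ᵀ * W t (ℓ + 1)) := by
  have master : ∀ ℓ, ℓ < H → ∀ (t : ℝ) (i j : Fin (d (ℓ + 1))),
      ∃ D : ℝ, HasDerivAt (fun s => (W s ℓ * (W s ℓ)ᵀ) i j) D t ∧
        HasDerivAt (fun s => ((W s (ℓ + 1))ᵀ * W s (ℓ + 1)) i j) D t := by
    intro ℓ hℓ t i j
    set V := W t with hV
    obtain ⟨b, hb⟩ : ∃ b, (ℓ + 1) + b = H := ⟨H - (ℓ + 1), by omega⟩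
    have hab1 : ℓ + (b + 1) = H := by omega
    set E := chainProd d V (H + 1) * B - Y with hE
    set M1 : Matrix (Fin (d (ℓ + 1))) (Fin (d ℓ)) ℝ :=
      (seg d V (ℓ + 1) (b + 1))ᵀ *
        E.submatrix (Fin.cast (congrArg d (show (ℓ + 1) + (b + 1) = H + 1 by omega))) id *
        Bᵀ * (chainProd d V ℓ)ᵀ with hM1
    set M2 : Matrix (Fin (d (ℓ + 2))) (Fin (d (ℓ + 1))) ℝ :=
      (seg d V (ℓ + 2) b)ᵀ *
        E.submatrix (Fin.cast (congrArg d (show (ℓ + 2) + b = H + 1 by omega))) id *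
        Bᵀ * (chainProd d V (ℓ + 1))ᵀ with hM2
    have hW1 : ∀ (p : Fin (d (ℓ + 1))) (q : Fin (d ℓ)),
        HasDerivAt (fun s => W s ℓ p q) (-(2 / m * M1 p q)) t :=
      fun p q => hflow ℓ (b + 1) hab1 p q t
    have hW2 : ∀ (p : Fin (d (ℓ + 2))) (q : Fin (d (ℓ + 1))),
        HasDerivAt (fun s => W s (ℓ + 1) p q) (-(2 / m * M2 p q)) t :=
      fun p q => hflow (ℓ + 1) b hb p q t
    have key := key_identity H nbar d B Y V ℓ b
      (show (ℓ + 1) + (b + 1) = H + 1 by omega) (show (ℓ + 2) + b = H + 1 by omega)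
    have key' : M1 * (V ℓ)ᵀ = (V (ℓ + 1))ᵀ * M2 := key
    refine ⟨-(2 / m) * ((M1 * (V ℓ)ᵀ) i j + (M1 * (V ℓ)ᵀ) j i), ?_, ?_⟩
    · have hfun : (fun s => (W s ℓ * (W s ℓ)ᵀ) i j) =
          fun s => ∑ k, W s ℓ i k * W s ℓ j k := by
        funext s; simp [Matrix.mul_apply]
      rw [hfun]
      have hD : HasDerivAt (fun s => ∑ k, W s ℓ i k * W s ℓ j k)
          (∑ k, (-(2 / m * M1 i k) * V ℓ j k + V ℓ i k * -(2 / m * M1 j k))) t := by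
        refine HasDerivAt.fun_sum (fun k _ => ?_)
        exact (hW1 i k).mul (hW1 j k)
      convert hD using 1
      rw [Matrix.mul_apply, Matrix.mul_apply]
      simp only [Matrix.transpose_apply]
      rw [mul_add, Finset.mul_sum, Finset.mul_sum, ← Finset.sum_add_distrib]
      exact Finset.sum_congr rfl fun k _ => by ring
    · have hfun : (fun s => ((W s (ℓ + 1))ᵀ * W s (ℓ + 1)) i j) =
          fun s => ∑ k, W s (ℓ + 1) k i * W s (ℓ + 1) k j := by
        funext s; simp [Matrix.mul_apply]
      rw [hfun]
      have hD : HasDerivAt (fun s => ∑ k, W s (ℓ + 1) k i * W s (ℓ + 1) k j)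
          (∑ k, (-(2 / m * M2 k i) * V (ℓ + 1) k j + V (ℓ + 1) k i * -(2 / m * M2 k j))) t := by
        refine HasDerivAt.fun_sum (fun k _ => ?_)
        exact (hW2 k i).mul (hW2 k j)
      convert hD using 1
      have e1 : (M1 * (V ℓ)ᵀ) i j = ((V (ℓ + 1))ᵀ * M2) i j := by rw [key']
      have e2 : (M1 * (V ℓ)ᵀ) j i = ((V (ℓ + 1))ᵀ * M2) j i := by rw [key']
      rw [e1, e2, Matrix.mul_apply, Matrix.mul_apply]
      simp only [Matrix.transpose_apply]
      rw [mul_add, Finset.mul_sum, Finset.mul_sum, ← Finset.sum_add_distrib]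
      exact Finset.sum_congr rfl fun k _ => by ring
  constructor
  · intro ℓ hℓ t i j
    obtain ⟨D, h1, h2⟩ := master ℓ hℓ t i j
    rw [h1.deriv, h2.deriv]
  · intro hbal t _ ℓ hℓ
    ext i j
    have hconst : ∀ s : ℝ, HasDerivAt
        (fun s => (W s ℓ * (W s ℓ)ᵀ) i j - ((W s (ℓ + 1))ᵀ * W s (ℓ + 1)) i j) 0 s := by
      intro s
      obtain ⟨D, h1, h2⟩ := master ℓ hℓ s i j
      simpa using h1.fun_sub h2
    have := is_const_of_deriv_eq_zero
      (fun s => (hconst s).differentiableAt)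
      (fun s => (hconst s).deriv) t 0
    have h0 : (W 0 ℓ * (W 0 ℓ)ᵀ) i j = ((W 0 (ℓ + 1))ᵀ * W 0 (ℓ + 1)) i j := by
      rw [hbal ℓ hℓ]
    have : (W t ℓ * (W t ℓ)ᵀ) i j - ((W t (ℓ + 1))ᵀ * W t (ℓ + 1)) i j = 0 := by
      rw [this, h0, sub_self]
    linarith
end

section
/- Let F: R^p → [0,∞) be a nonnegative C² function, x₀ ∈ R^p, and r > 0 such that 4F(x₀) < r²·α, where α = inf{ |∇F(x)|²/F(x) : x ∈ B(x₀,r), F(x) ≠ 0 }. Then the gradient flow φ'(t) = −∇F(φ(t)) with φ(0) = x₀ has a unique solution defined for all t ≥ 0, φ(t) stays in the closed ball B(x₀,r), φ(t) converges as t → ∞ to a point x̃ ∈ B(x₀,r) with F(x̃) = 0, and moreover ‖φ(t) − x̃‖₂ ≤ r·e^{−αt/2} and F(φ(t)) ≤ e^{−αt} F(x₀) for all t ≥ 0. -/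
open Metric Filter Set Real InnerProductSpace Topology

section Auxiliary

variable {E : Type*} [NormedAddCommGroup E] [InnerProductSpace ℝ E]

lemma grad_zero_of_min [CompleteSpace E] {F : E → ℝ} {x : E}
    (hmin : ∀ y, F x ≤ F y) : gradient F x = 0 := by
  have h : IsLocalMin F x := Filter.Eventually.of_forall hmin
  unfold gradient
  rw [h.fderiv_eq_zero, map_zero]

lemma hasDerivAt_comp_grad [CompleteSpace E] {F : E → ℝ} (hF : Differentiable ℝ F)
    {φ : ℝ → E} {d : E} {t : ℝ} (hφ : HasDerivAt φ d t) :
    HasDerivAt (fun s => F (φ s)) (@inner ℝ _ _ (gradient F (φ t)) d) t := by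
  have h1 : HasGradientAt F (gradient F (φ t)) (φ t) := (hF (φ t)).hasGradientAt
  have h2 : HasFDerivAt F (toDual ℝ E (gradient F (φ t))) (φ t) := h1
  simpa [toDual_apply_apply, Function.comp_def] using h2.comp_hasDerivAt t hφ

lemma contDiff_neg_grad [CompleteSpace E] {F : E → ℝ} (hF : ContDiff ℝ 2 F) :
    ContDiff ℝ 1 (fun x => -gradient F x) := by
  have h1 : ContDiff ℝ 1 (fderiv ℝ F) := hF.fderiv_right (by norm_num)
  have h2 : ContDiff ℝ 1 (fun x => (toDual ℝ E).symm (fderiv ℝ F x)) :=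
    ((toDual ℝ E).symm.toContinuousLinearEquiv.toContinuousLinearMap.contDiff).comp h1
  exact h2.neg

lemma lipschitzOnWith_of_contDiff [ProperSpace E] {v : E → E} (hv : ContDiff ℝ 1 v) (c : E) (R : ℝ) :
    ∃ K : NNReal, LipschitzOnWith K v (closedBall c R) := by
  obtain ⟨M, hM⟩ := (isCompact_closedBall c R).exists_bound_of_continuousOn
    ((hv.continuous_fderiv one_ne_zero).continuousOn)
  refine ⟨M.toNNReal, Convex.lipschitzOnWith_of_nnnorm_fderiv_le
    (fun x _ => (hv.differentiable one_ne_zero).differentiableAt) (fun x hx => ?_) (convex_closedBall c R)⟩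
  rw [← NNReal.coe_le_coe, coe_nnnorm, Real.coe_toNNReal']
  exact le_max_of_le_left (hM x hx)

lemma sqrt_add_le' (g ε : ℝ) (hg : 0 ≤ g) (hε : 0 ≤ ε) :
    Real.sqrt (g + ε) ≤ Real.sqrt g + Real.sqrt ε := by
  rw [show Real.sqrt g + Real.sqrt ε
      = Real.sqrt ((Real.sqrt g + Real.sqrt ε)^2) from
      (Real.sqrt_sq (by positivity)).symm]
  apply Real.sqrt_le_sqrt
  nlinarith [Real.sq_sqrt hg, Real.sq_sqrt hε, Real.sqrt_nonneg g, Real.sqrt_nonneg ε]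

lemma keyineq {α G g ε : ℝ} (hα : 0 < α) (hG : 0 ≤ G) (hg : 0 ≤ g) (hε : 0 < ε)
    (h : α * g ≤ G ^ 2) :
    G ≤ G ^ 2 / (Real.sqrt α * Real.sqrt (g + ε)) + Real.sqrt α * Real.sqrt ε := by
  have sαpos : 0 < Real.sqrt α := Real.sqrt_pos.mpr hα
  have upos : 0 < Real.sqrt (g + ε) := Real.sqrt_pos.mpr (by linarith)
  have hu2 : Real.sqrt (g + ε) ^ 2 = g + ε := Real.sq_sqrt (by linarith)
  have hsα2 : Real.sqrt α ^ 2 = α := Real.sq_sqrt hα.le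
  have hsg2 : Real.sqrt g ^ 2 = g := Real.sq_sqrt hg
  have hsε2 : Real.sqrt ε ^ 2 = ε := Real.sq_sqrt hε.le
  have hGsg : Real.sqrt α * Real.sqrt g ≤ G := by
    rw [← Real.sqrt_mul hα.le]
    calc Real.sqrt (α * g) ≤ Real.sqrt (G^2) := Real.sqrt_le_sqrt h
    _ = G := Real.sqrt_sq hG
  have husg : Real.sqrt (g + ε) ≤ Real.sqrt g + Real.sqrt ε := sqrt_add_le' g ε hg hε.le
  rw [← sub_le_iff_le_add, le_div_iff₀ (by positivity)]
  rcases le_or_gt (Real.sqrt α * Real.sqrt (g + ε)) G with hc | hc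
  · nlinarith [mul_nonneg (mul_nonneg sαpos.le (Real.sqrt_nonneg ε)) (mul_pos sαpos upos).le]
  · nlinarith [mul_nonneg (Real.sqrt_nonneg g) (sub_nonneg.2 hc.le),
      mul_le_mul_of_nonneg_left husg (mul_pos (mul_pos sαpos sαpos) upos).le,
      mul_nonneg hG (sub_nonneg.2 hc.le), sq_nonneg (G - Real.sqrt α * Real.sqrt (g+ε))]


lemma flow_estimates [CompleteSpace E]
    {F : E → ℝ} (hF : ContDiff ℝ 2 F) (hF0 : ∀ x, 0 ≤ F x)
    {x₀ : E} {r α : ℝ} (hαpos : 0 < α)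
    (hkey : ∀ x ∈ closedBall x₀ r, α * F x ≤ ‖gradient F x‖ ^ 2)
    {T a₀ : ℝ} (ha₀ : 0 < a₀) (hT : 0 ≤ T)
    {f : ℝ → E} (hf0 : f 0 = x₀)
    (hdf : ∀ t ∈ Icc (-a₀) T, HasDerivWithinAt f (-gradient F (f t)) (Icc (-a₀) T) t)
    (hball : ∀ t ∈ Icc 0 T, f t ∈ closedBall x₀ r) :
    (∀ t ∈ Icc 0 T, F (f t) ≤ Real.exp (-α * t) * F x₀) ∧
    (∀ a b, 0 ≤ a → a ≤ b → b ≤ T →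
      ‖f b - f a‖ ≤ 2 / Real.sqrt α * (Real.sqrt (F (f a)) - Real.sqrt (F (f b)))) := by
  have hFd : Differentiable ℝ F := hF.differentiable (by norm_num)
  have hasDA : ∀ t ∈ Ioo (-a₀) T, HasDerivAt f (-gradient F (f t)) t := fun t ht =>
    (hdf t (Ioo_subset_Icc_self ht)).hasDerivAt (Icc_mem_nhds ht.1 ht.2)
  have hsub : Icc (0:ℝ) T ⊆ Icc (-a₀) T := Icc_subset_Icc (by linarith) le_rfl
  have hfc : ContinuousOn f (Icc 0 T) := fun t ht =>
    ((hdf t (hsub ht)).continuousWithinAt).mono hsub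
  -- derivative of F ∘ f
  have hgd : ∀ t ∈ Ioo (-a₀) T,
      HasDerivAt (fun s => F (f s)) (-‖gradient F (f t)‖^2) t := by
    intro t ht
    have := hasDerivAt_comp_grad hFd (hasDA t ht)
    rwa [inner_neg_right, real_inner_self_eq_norm_sq] at this
  -- Part (i)
  have parti : ∀ t ∈ Icc 0 T, F (f t) ≤ Real.exp (-α * t) * F x₀ := by
    set h : ℝ → ℝ := fun t => Real.exp (α * t) * F (f t) with hh
    have hanti : AntitoneOn h (Icc 0 T) := by
      have hder : ∀ t ∈ Ioo 0 T,
          HasDerivAt h (Real.exp (α * t) * (α * F (f t) - ‖gradient F (f t)‖^2)) t := by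
        intro t ht
        have ht' : t ∈ Ioo (-a₀) T := ⟨by linarith [ht.1], ht.2⟩
        have he : HasDerivAt (fun s => Real.exp (α * s)) (Real.exp (α * t) * α) t := by
          simpa using (((hasDerivAt_id t).const_mul α).exp)
        have := he.mul (hgd t ht')
        refine this.congr_deriv ?_
        ring
      apply antitoneOn_of_deriv_nonpos (convex_Icc 0 T)
      · exact (Real.continuous_exp.comp (continuous_const.mul continuous_id)).continuousOn.mul
          (hF.continuous.comp_continuousOn hfc)
      · intro t ht
        rw [interior_Icc] at ht
        exact ((hder t ht).differentiableAt).differentiableWithinAt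
      · intro t ht
        rw [interior_Icc] at ht
        rw [(hder t ht).deriv]
        have hkey' := hkey (f t) (hball t (Ioo_subset_Icc_self ht))
        have := Real.exp_pos (α * t)
        nlinarith
    intro t ht
    have h1 : h t ≤ h 0 := hanti (left_mem_Icc.mpr hT) ht ht.1
    have h2 : h 0 = F x₀ := by simp [hh, hf0]
    rw [h2] at h1
    have h3 : Real.exp (-α * t) * (Real.exp (α * t) * F (f t)) ≤ Real.exp (-α * t) * F x₀ :=
      mul_le_mul_of_nonneg_left h1 (Real.exp_pos _).le
    rw [← mul_assoc, ← Real.exp_add, neg_mul, neg_add_cancel, Real.exp_zero, one_mul] at h3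
    rwa [neg_mul]
  refine ⟨parti, ?_⟩
  -- Part (ii)
  intro a b ha hab hbT
  set c₂ : ℝ := 2 / Real.sqrt α with hc₂
  have hsα : 0 < Real.sqrt α := Real.sqrt_pos.mpr hαpos
  have hIoo : ∀ x ∈ Ico a b, x ∈ Ioo (-a₀) T := fun x hx =>
    ⟨by linarith [hx.1], lt_of_lt_of_le hx.2 hbT⟩
  have hballx : ∀ x ∈ Ico a b, f x ∈ closedBall x₀ r := fun x hx =>
    hball x ⟨le_trans ha hx.1, le_of_lt (lt_of_lt_of_le hx.2 hbT)⟩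
  have hmain : ∀ ε : ℝ, ε ∈ Ioi (0:ℝ) →
      ‖f b - f a‖ ≤ c₂ * (Real.sqrt (F (f a) + ε) - Real.sqrt (F (f b) + ε))
        + Real.sqrt α * Real.sqrt ε * (b - a) := by
    intro ε hε
    set u : ℝ → ℝ := fun t => Real.sqrt (F (f t) + ε) with hu
    have hud : ∀ x ∈ Ico a b,
        HasDerivAt u (-‖gradient F (f x)‖^2 / (2 * u x)) x := by
      intro x hx
      have h1 : HasDerivAt (fun s => F (f s) + ε) (-‖gradient F (f x)‖^2) x :=
        (hgd x (hIoo x hx)).add_const ε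
      have h2 : (0:ℝ) < ε := hε
      exact h1.sqrt (by have := hF0 (f x); positivity)
    set B : ℝ → ℝ := fun t => c₂ * (u a - u t) + Real.sqrt α * Real.sqrt ε * (t - a) with hB
    set B' : ℝ → ℝ := fun x =>
      c₂ * (‖gradient F (f x)‖^2 / (2 * u x)) + Real.sqrt α * Real.sqrt ε with hB'
    have hBd : ∀ x ∈ Ico a b, HasDerivAt B (B' x) x := by
      intro x hx
      have h1 := ((hasDerivAt_const x (u a)).sub (hud x hx)).const_mul c₂
      have h2 := ((hasDerivAt_id x).sub_const a).const_mul (Real.sqrt α * Real.sqrt ε)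
      have := h1.add h2
      refine this.congr_deriv ?_
      simp [hB']
      ring
    have hcont : ContinuousOn (fun t => f t - f a) (Icc a b) :=
      (hfc.mono (Icc_subset_Icc ha hbT)).sub continuousOn_const
    have hfd' : ∀ x ∈ Ico a b,
        HasDerivWithinAt (fun t => f t - f a) (-gradient F (f x)) (Ici x) x := fun x hx =>
      (((hasDA x (hIoo x hx)).sub_const (f a))).hasDerivWithinAt
    have hBc : ContinuousOn B (Icc a b) := by
      have : ContinuousOn u (Icc a b) := by
        apply Real.continuous_sqrt.comp_continuousOn
        exact (hF.continuous.comp_continuousOn (hfc.mono (Icc_subset_Icc ha hbT))).add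
          continuousOn_const
      exact ((continuousOn_const.sub this).const_smul c₂).add
        ((continuousOn_const.mul (continuousOn_id.sub continuousOn_const)))
    have hbound : ∀ x ∈ Ico a b, ‖-gradient F (f x)‖ ≤ B' x := by
      intro x hx
      rw [norm_neg]
      have hk := hkey (f x) (hballx x hx)
      have h1 := keyineq hαpos (norm_nonneg (gradient F (f x))) (hF0 (f x)) hε hk
      calc ‖gradient F (f x)‖
          ≤ ‖gradient F (f x)‖^2 / (Real.sqrt α * Real.sqrt (F (f x) + ε))
            + Real.sqrt α * Real.sqrt ε := h1
        _ = B' x := by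
            have h2 : (0:ℝ) < ε := hε
            have hupos : 0 < Real.sqrt (F (f x) + ε) :=
              Real.sqrt_pos.mpr (by have := hF0 (f x); linarith)
            simp only [hB', hc₂, hu]
            congr 1
            field_simp
    have hfence := image_norm_le_of_norm_deriv_right_le_deriv_boundary' hcont hfd'
      (by simp [hB]) hBc (fun x hx => (hBd x hx).hasDerivWithinAt) hbound
      (right_mem_Icc.mpr hab)
    simpa [hB] using hfence
  -- limit ε → 0
  have h0 : Tendsto (fun ε : ℝ => ε) (𝓝[>] (0:ℝ)) (𝓝 0) :=
    tendsto_id.mono_left nhdsWithin_le_nhds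
  have hten : Tendsto (fun ε : ℝ => c₂ * (Real.sqrt (F (f a) + ε) - Real.sqrt (F (f b) + ε))
      + Real.sqrt α * Real.sqrt ε * (b - a)) (𝓝[>] (0:ℝ))
      (𝓝 (2 / Real.sqrt α * (Real.sqrt (F (f a)) - Real.sqrt (F (f b))))) := by
    have hsq : Tendsto (fun ε : ℝ => Real.sqrt ε) (𝓝[>] (0:ℝ)) (𝓝 0) := by
      have := (Real.continuous_sqrt.tendsto 0).comp h0
      simpa [Function.comp_def] using this
    have h1 : ∀ c : ℝ, Tendsto (fun ε : ℝ => Real.sqrt (c + ε)) (𝓝[>] (0:ℝ)) (𝓝 (Real.sqrt c)) := by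
      intro c
      have hc : Tendsto (fun ε : ℝ => c + ε) (𝓝[>] (0:ℝ)) (𝓝 c) := by
        simpa using tendsto_const_nhds.add h0
      simpa [Function.comp_def] using (Real.continuous_sqrt.tendsto c).comp hc
    have hA := (h1 (F (f a))).sub (h1 (F (f b)))
    have hB2 : Tendsto (fun ε : ℝ => Real.sqrt α * Real.sqrt ε * (b - a)) (𝓝[>] (0:ℝ)) (𝓝 0) := by
      have := (hsq.const_mul (Real.sqrt α)).mul_const (b - a)
      simpa using this
    have hC := (hA.const_mul c₂).add hB2
    simpa [hc₂] using hC
  exact ge_of_tendsto hten (by filter_upwards [self_mem_nhdsWithin] with ε hε using hmain ε hε)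


lemma stay_in_ball {v : E → E} {x₀ : E} {r ρ C T S : ℝ}
    (hρ : 0 ≤ ρ) (hTS : T ≤ S) (hC0 : 0 ≤ C)
    (hCb : ∀ x ∈ closedBall x₀ r, ‖v x‖ ≤ C)
    (hsum : ρ + (C + 1) * (S - T) ≤ r)
    {g : ℝ → E} (hgT : g T ∈ closedBall x₀ ρ)
    (hgd : ∀ t ∈ Icc T S, HasDerivWithinAt g (v (g t)) (Icc T S) t) :
    ∀ t ∈ Icc T S, g t ∈ closedBall x₀ r := by
  have hgc : ContinuousOn g (Icc T S) := fun t ht => (hgd t ht).continuousWithinAt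
  set B : ℝ → ℝ := fun t => ρ + (C + 1) * (t - T) with hB
  have hBd : ∀ x : ℝ, HasDerivAt B (C + 1) x := by
    intro x
    have := (((hasDerivAt_id x).sub_const T).const_mul (C + 1)).const_add ρ
    simpa [hB] using this
  have hfence := image_norm_le_of_norm_deriv_right_lt_deriv_boundary
    (f := fun t => g t - x₀) (f' := fun t => v (g t)) (a := T) (b := S)
    (hgc.sub continuousOn_const)
    (fun x hx => (((hgd x (Ico_subset_Icc_self hx)).sub_const x₀)).mono_of_mem_nhdsWithin
      (Icc_mem_nhdsGE_of_mem hx))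
    (by simpa [hB] using (mem_closedBall_iff_norm.mp hgT))
    hBd
    (fun x hx heq => by
      have hxr : g x ∈ closedBall x₀ r := by
        rw [mem_closedBall_iff_norm, heq, hB]
        have : (C + 1) * (x - T) ≤ (C + 1) * (S - T) :=
          mul_le_mul_of_nonneg_left (by linarith [hx.2.le]) (by linarith)
        simp only
        linarith
      exact lt_of_le_of_lt (hCb (g x) hxr) (by linarith))
  intro t ht
  rw [mem_closedBall_iff_norm]
  calc ‖g t - x₀‖ ≤ B t := hfence ht
  _ ≤ r := by
      have : (C + 1) * (t - T) ≤ (C + 1) * (S - T) :=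
        mul_le_mul_of_nonneg_left (by linarith [ht.2]) (by linarith)
      simp only [hB]
      linarith


lemma global_solution [ProperSpace E] [CompleteSpace E]
    {F : E → ℝ} (hF : ContDiff ℝ 2 F) (hF0 : ∀ x, 0 ≤ F x)
    {x₀ : E} {r α ρ : ℝ} (hαpos : 0 < α) (hρ : 0 ≤ ρ) (hρr : ρ < r)
    (hkey : ∀ x ∈ closedBall x₀ r, α * F x ≤ ‖gradient F x‖ ^ 2)
    (hρbound : 2 / Real.sqrt α * Real.sqrt (F x₀) ≤ ρ) :
    ∃ a₀ : ℝ, 0 < a₀ ∧ ∀ n : ℕ, ∃ f : ℝ → E, f 0 = x₀ ∧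
      (∀ t ∈ Icc (-a₀) ((n+1)*a₀),
        HasDerivWithinAt f (-gradient F (f t)) (Icc (-a₀) ((n+1)*a₀)) t) ∧
      (∀ t ∈ Icc 0 ((n+1)*a₀), f t ∈ closedBall x₀ r) := by
  set v : E → E := fun x => -gradient F x with hv
  have hv1 : ContDiff ℝ 1 v := contDiff_neg_grad hF
  have hr0 : 0 ≤ r := le_trans hρ hρr.le
  obtain ⟨C, hCb⟩ := (isCompact_closedBall x₀ r).exists_bound_of_continuousOn
    hv1.continuous.continuousOn
  have hC0 : 0 ≤ C := le_trans (norm_nonneg _) (hCb x₀ (mem_closedBall_self hr0))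
  obtain ⟨K, hK⟩ := lipschitzOnWith_of_contDiff hv1 x₀ r
  set a₀ : ℝ := (r - ρ) / (C + 1) with ha₀def
  have ha₀ : 0 < a₀ := div_pos (by linarith) (by linarith)
  have hCa₀ : (C + 1) * a₀ = r - ρ := by
    have hC1 : C + 1 ≠ 0 := by linarith
    rw [ha₀def]; field_simp
  have hCa₀' : C * a₀ ≤ r - ρ := by nlinarith
  refine ⟨a₀, ha₀, ?_⟩
  -- a Picard–Lindelöf step from any point of the small ball
  have hstep : ∀ (T : ℝ) (y : E), y ∈ closedBall x₀ ρ →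
      ∃ g : ℝ → E, g T = y ∧ ∀ t ∈ Icc T (T + a₀),
        HasDerivWithinAt g (v (g t)) (Icc T (T + a₀)) t := by
    intro T y hy
    have hsubset : closedBall y (C * a₀) ⊆ closedBall x₀ r := by
      apply closedBall_subset_closedBall'
      have := mem_closedBall.mp hy
      linarith
    have hsubset' : closedBall y ((C * a₀).toNNReal : ℝ) ⊆ closedBall x₀ r := by
      rw [Real.coe_toNNReal _ (by positivity)]; exact hsubset
    have hpl : IsPicardLindelof (fun _ x => v x) (tmin := T) (tmax := T + a₀)
        ⟨T, le_rfl, by linarith⟩ y (C * a₀).toNNReal 0 C.toNNReal K :=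
      IsPicardLindelof.of_time_independent
        (fun x hx => by rw [Real.coe_toNNReal _ hC0]; exact hCb x (hsubset' hx))
        (hK.mono hsubset')
        (by rw [Real.coe_toNNReal _ hC0, Real.coe_toNNReal _ (by positivity)]
            simp [max_eq_left ha₀.le])
    obtain ⟨g, hg0, hgd⟩ := hpl.exists_eq_forall_mem_Icc_hasDerivWithinAt₀
    exact ⟨g, hg0, hgd⟩
  intro n
  induction n with
  | zero =>
    obtain ⟨g, hg0, hgd⟩ : ∃ g : ℝ → E, g 0 = x₀ ∧ ∀ t ∈ Icc (-a₀) a₀,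
        HasDerivWithinAt g (v (g t)) (Icc (-a₀) a₀) t := by
      have hsubset : closedBall x₀ (C * a₀) ⊆ closedBall x₀ r :=
        closedBall_subset_closedBall (by linarith)
      have hsubset' : closedBall x₀ ((C * a₀).toNNReal : ℝ) ⊆ closedBall x₀ r := by
        rw [Real.coe_toNNReal _ (by positivity)]; exact hsubset
      have hpl : IsPicardLindelof (fun _ x => v x) (tmin := -a₀) (tmax := a₀)
          ⟨0, by linarith, ha₀.le⟩ x₀ (C * a₀).toNNReal 0 C.toNNReal K :=
        IsPicardLindelof.of_time_independent
          (fun x hx => by rw [Real.coe_toNNReal _ hC0]; exact hCb x (hsubset' hx))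
          (hK.mono hsubset')
          (by rw [Real.coe_toNNReal _ hC0, Real.coe_toNNReal _ (by positivity)]
              simp)
      obtain ⟨g, hg0, hgd⟩ := hpl.exists_eq_forall_mem_Icc_hasDerivWithinAt₀
      exact ⟨g, hg0, hgd⟩
    refine ⟨g, hg0, by simpa using hgd, ?_⟩
    have hstay := stay_in_ball (v := v) (r := r) (T := 0) (S := a₀) hρ ha₀.le hC0 hCb
      (by rw [sub_zero]; linarith) (by rw [hg0]; exact mem_closedBall_self hρ)
      (fun t ht => (hgd t ⟨by linarith [ht.1], ht.2⟩).mono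
        (Icc_subset_Icc (by linarith) le_rfl))
    intro t ht
    exact hstay t (by simpa using ht)
  | succ n ih =>
    obtain ⟨f, hf0, hdf, hball⟩ := ih
    set Tn : ℝ := (n + 1) * a₀ with hTn
    have hTn0 : 0 ≤ Tn := by positivity
    have hTnmem : Tn ∈ Icc (0:ℝ) Tn := ⟨hTn0, le_rfl⟩
    -- f Tn is in the small ball
    have hfTn : f Tn ∈ closedBall x₀ ρ := by
      obtain ⟨hi, hii⟩ := flow_estimates hF hF0 hαpos hkey ha₀ hTn0 hf0 hdf hball
      have h2 := hii 0 Tn le_rfl hTn0 le_rfl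
      rw [hf0] at h2
      rw [mem_closedBall_iff_norm]
      have h3 : 0 ≤ 2 / Real.sqrt α * Real.sqrt (F (f Tn)) := by positivity
      calc ‖f Tn - x₀‖ ≤ 2 / Real.sqrt α * (Real.sqrt (F x₀) - Real.sqrt (F (f Tn))) := h2
        _ ≤ 2 / Real.sqrt α * Real.sqrt (F x₀) := by rw [mul_sub]; linarith
        _ ≤ ρ := hρbound
    obtain ⟨g, hgT, hgd⟩ := hstep Tn (f Tn) hfTn
    have hgstay : ∀ t ∈ Icc Tn (Tn + a₀), g t ∈ closedBall x₀ r := by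
      apply stay_in_ball hρ (by linarith) hC0 hCb _ (by rw [hgT]; exact hfTn) hgd
      rw [add_sub_cancel_left]
      linarith
    -- glue
    set h : ℝ → E := fun t => if t ≤ Tn then f t else g t with hh
    have hdomeq : Icc (-a₀) (Tn + a₀) = Icc (-a₀) Tn ∪ Icc Tn (Tn + a₀) :=
      (Icc_union_Icc_eq_Icc (by linarith) (by linarith)).symm
    have harith : ((n : ℝ) + 1 + 1) * a₀ = Tn + a₀ := by rw [hTn]; ring
    have hfh : ∀ s : ℝ, s ≤ Tn → h s = f s := fun s hs => if_pos hs
    have hgh : ∀ s ∈ Icc Tn (Tn + a₀), h s = g s := by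
      intro s hs
      by_cases hsT : s ≤ Tn
      · have : s = Tn := le_antisymm hsT hs.1
        rw [hfh s hsT, this, hgT]
      · exact if_neg hsT
    refine ⟨h, by rw [hfh 0 hTn0, hf0], ?_, ?_⟩
    · intro t ht
      push_cast at ht ⊢
      rw [harith] at ht ⊢
      rcases lt_trichotomy t Tn with hlt | heq | hgt
      · have h1 : HasDerivWithinAt f (v (f t)) (Icc (-a₀) Tn) t := hdf t ⟨ht.1, hlt.le⟩
        have hmem : Icc (-a₀) Tn ∈ 𝓝[Icc (-a₀) (Tn + a₀)] t := by
          apply Filter.mem_of_superset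
            (Filter.inter_mem self_mem_nhdsWithin
              (mem_nhdsWithin_of_mem_nhds (Iio_mem_nhds hlt)))
          rintro s ⟨hs1, hs2⟩
          exact ⟨hs1.1, le_of_lt hs2⟩
        have h2 := h1.mono_of_mem_nhdsWithin hmem
        have heve : h =ᶠ[𝓝[Icc (-a₀) (Tn + a₀)] t] f := by
          filter_upwards [mem_nhdsWithin_of_mem_nhds (Iio_mem_nhds hlt)] with s hs
          exact hfh s (le_of_lt hs)
        have h3 := h2.congr_of_eventuallyEq heve (hfh t hlt.le)
        rwa [hfh t hlt.le]
      · have htmem : t ∈ Icc Tn (Tn + a₀) := ⟨heq.ge, by rw [heq]; linarith⟩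
        have h1 : HasDerivWithinAt h (v (h t)) (Icc (-a₀) Tn) t := by
          have := (hdf t ⟨ht.1, heq.le⟩).congr (fun y hy => hfh y hy.2) (hfh t heq.le)
          rwa [hfh t heq.le]
        have h2 : HasDerivWithinAt h (v (h t)) (Icc Tn (Tn + a₀)) t := by
          have := (hgd t htmem).congr (fun y hy => hgh y hy) (hgh t htmem)
          rwa [hgh t htmem]
        rw [hdomeq]
        exact h1.union h2
      · have h1 : HasDerivWithinAt g (v (g t)) (Icc Tn (Tn + a₀)) t := hgd t ⟨hgt.le, ht.2⟩
        have hmem : Icc Tn (Tn + a₀) ∈ 𝓝[Icc (-a₀) (Tn + a₀)] t := by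
          apply Filter.mem_of_superset
            (Filter.inter_mem self_mem_nhdsWithin
              (mem_nhdsWithin_of_mem_nhds (Ioi_mem_nhds hgt)))
          rintro s ⟨hs1, hs2⟩
          exact ⟨le_of_lt hs2, hs1.2⟩
        have h2 := h1.mono_of_mem_nhdsWithin hmem
        have heve : h =ᶠ[𝓝[Icc (-a₀) (Tn + a₀)] t] g := by
          filter_upwards [mem_nhdsWithin_of_mem_nhds (Ioi_mem_nhds hgt)] with s hs
          exact if_neg (not_le.mpr hs)
        have hth : h t = g t := if_neg (not_le.mpr hgt)
        have h3 := h2.congr_of_eventuallyEq heve hth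
        rwa [hth]
    · intro t ht
      push_cast at ht
      rw [harith] at ht
      by_cases hsT : t ≤ Tn
      · rw [hfh t hsT]
        exact hball t ⟨ht.1, hsT⟩
      · rw [hgh t ⟨le_of_not_ge hsT, ht.2⟩]
        exact hgstay t ⟨le_of_not_ge hsT, ht.2⟩


lemma ode_uniq_full [ProperSpace E] {v : E → E} (hv : ContDiff ℝ 1 v) {a b t₀ : ℝ}
    (ht : t₀ ∈ Ioo a b) {f g : ℝ → E}
    (hfc : ContinuousOn f (Icc a b)) (hgc : ContinuousOn g (Icc a b))
    (hfd : ∀ t ∈ Ioo a b, HasDerivAt f (v (f t)) t)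
    (hgd : ∀ t ∈ Ioo a b, HasDerivAt g (v (g t)) t)
    (h0 : f t₀ = g t₀) : EqOn f g (Icc a b) := by
  obtain ⟨R, hR⟩ := ((isCompact_Icc.image_of_continuousOn hfc).union
     (isCompact_Icc.image_of_continuousOn hgc)).isBounded.subset_closedBall (f t₀)
  obtain ⟨K, hK⟩ := lipschitzOnWith_of_contDiff hv (f t₀) R
  exact ODE_solution_unique_of_mem_Icc (v := fun _ x => v x)
    (s := fun _ => closedBall (f t₀) R) (fun _ _ => hK) ht hfc hfd
    (fun t ht' => hR (Or.inl ⟨t, Ioo_subset_Icc_self ht', rfl⟩)) hgc hgd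
    (fun t ht' => hR (Or.inr ⟨t, Ioo_subset_Icc_self ht', rfl⟩)) h0

lemma ode_uniq_right [ProperSpace E] {v : E → E} (hv : ContDiff ℝ 1 v) {a b : ℝ}
    {f g : ℝ → E}
    (hfc : ContinuousOn f (Icc a b)) (hgc : ContinuousOn g (Icc a b))
    (hfd : ∀ t ∈ Ico a b, HasDerivWithinAt f (v (f t)) (Ici t) t)
    (hgd : ∀ t ∈ Ico a b, HasDerivWithinAt g (v (g t)) (Ici t) t)
    (h0 : f a = g a) : EqOn f g (Icc a b) := by
  obtain ⟨R, hR⟩ := ((isCompact_Icc.image_of_continuousOn hfc).union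
     (isCompact_Icc.image_of_continuousOn hgc)).isBounded.subset_closedBall (f a)
  obtain ⟨K, hK⟩ := lipschitzOnWith_of_contDiff hv (f a) R
  exact ODE_solution_unique_of_mem_Icc_right (v := fun _ x => v x)
    (s := fun _ => closedBall (f a) R) (fun _ _ => hK) hfc hfd
    (fun t ht' => hR (Or.inl ⟨t, Ico_subset_Icc_self ht', rfl⟩)) hgc hgd
    (fun t ht' => hR (Or.inr ⟨t, Ico_subset_Icc_self ht', rfl⟩)) h0



end Auxiliary

open Metric Filter

set_option maxHeartbeats 2000000 in
/-- Chatterjee's local convergence theorem for gradient flow. -/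
theorem gradient_flow_local_convergence (p : ℕ)
    (F : EuclideanSpace ℝ (Fin p) → ℝ) (hF : ContDiff ℝ 2 F) (hF0 : ∀ x, 0 ≤ F x)
    (x₀ : EuclideanSpace ℝ (Fin p)) (r : ℝ) (hr : 0 < r)
    (α : ℝ)
    (hα : α = sInf {y : ℝ | ∃ x ∈ closedBall x₀ r, F x ≠ 0 ∧ y = ‖gradient F x‖ ^ 2 / F x})
    (hinit : 4 * F x₀ < r ^ 2 * α) :
    ∃ φ : ℝ → EuclideanSpace ℝ (Fin p),
      φ 0 = x₀ ∧
      (∀ t : ℝ, 0 ≤ t → HasDerivAt φ (-gradient F (φ t)) t) ∧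
      (∀ ψ : ℝ → EuclideanSpace ℝ (Fin p),
        ψ 0 = x₀ → (∀ t : ℝ, 0 ≤ t → HasDerivAt ψ (-gradient F (ψ t)) t) →
          ∀ t : ℝ, 0 ≤ t → ψ t = φ t) ∧
      (∀ t : ℝ, 0 ≤ t → φ t ∈ closedBall x₀ r) ∧
      ∃ xt ∈ closedBall x₀ r, F xt = 0 ∧
        Tendsto φ atTop (nhds xt) ∧
        (∀ t : ℝ, 0 ≤ t → ‖φ t - xt‖ ≤ r * Real.exp (-α * t / 2)) ∧
        (∀ t : ℝ, 0 ≤ t → F (φ t) ≤ Real.exp (-α * t) * F x₀) := by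
  classical
  have hFd : Differentiable ℝ F := hF.differentiable (by norm_num)
  by_cases hzero : F x₀ = 0
  · -- degenerate case : x₀ is already a zero of F
    have hgrad0 : gradient F x₀ = 0 :=
      grad_zero_of_min (fun y => by rw [hzero]; exact hF0 y)
    refine ⟨fun _ => x₀, rfl, ?_, ?_, ?_, x₀, mem_closedBall_self hr.le, hzero,
      tendsto_const_nhds, ?_, ?_⟩
    · intro t _
      simpa [hgrad0] using hasDerivAt_const t x₀
    · -- uniqueness
      intro ψ hψ0 hψd t ht
      -- F ∘ ψ is identically zero on [0, ∞)
      have hgd : ∀ s : ℝ, 0 ≤ s →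
          HasDerivAt (fun u => F (ψ u)) (-‖gradient F (ψ s)‖^2) s := by
        intro s hs
        have := hasDerivAt_comp_grad hFd (hψd s hs)
        rwa [inner_neg_right, real_inner_self_eq_norm_sq] at this
      have hanti : AntitoneOn (fun u => F (ψ u)) (Ici 0) := by
        apply antitoneOn_of_deriv_nonpos (convex_Ici 0)
        · exact fun s hs => ((hgd s hs).continuousAt).continuousWithinAt
        · intro s hs
          rw [interior_Ici] at hs
          exact (hgd s hs.le).differentiableAt.differentiableWithinAt
        · intro s hs
          rw [interior_Ici] at hs
          rw [(hgd s hs.le).deriv]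
          exact neg_nonpos.mpr (by positivity)
      have hFzero : ∀ s : ℝ, 0 ≤ s → F (ψ s) = 0 := by
        intro s hs
        have h1 : F (ψ s) ≤ F (ψ 0) := hanti self_mem_Ici hs hs
        rw [hψ0, hzero] at h1
        exact le_antisymm h1 (hF0 _)
      have hψd0 : ∀ s ∈ Icc (0:ℝ) t, HasDerivWithinAt ψ 0 (Icc 0 t) s := by
        intro s hs
        have hg0 : gradient F (ψ s) = 0 :=
          grad_zero_of_min (fun y => by rw [hFzero s hs.1]; exact hF0 y)
        have := hψd s hs.1
        rw [hg0, neg_zero] at this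
        exact this.hasDerivWithinAt
      have := norm_image_sub_le_of_norm_deriv_le_segment' (C := 0) hψd0
        (fun x _ => by simp) t (right_mem_Icc.mpr ht)
      rw [hψ0] at this
      have h6 : ‖ψ t - x₀‖ ≤ 0 := by simpa using this
      have h7 : ψ t - x₀ = 0 := by
        have := le_antisymm h6 (norm_nonneg _)
        simpa using this
      simpa [sub_eq_zero] using h7
    · exact fun t _ => mem_closedBall_self hr.le
    · intro t _
      simp only [sub_self, norm_zero]
      positivity
    · intro t _
      simp [hzero]
  · -- main case : F x₀ > 0
    have hFpos : 0 < F x₀ := lt_of_le_of_ne (hF0 x₀) (Ne.symm hzero)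
    have hαpos : 0 < α := by nlinarith [sq_nonneg r]
    have hsα : 0 < Real.sqrt α := Real.sqrt_pos.mpr hαpos
    have hkey : ∀ x ∈ closedBall x₀ r, α * F x ≤ ‖gradient F x‖ ^ 2 := by
      intro x hx
      by_cases hFx : F x = 0
      · rw [hFx, mul_zero]; positivity
      · have hFxpos : 0 < F x := lt_of_le_of_ne (hF0 x) (Ne.symm hFx)
        have hbdd : BddBelow {y : ℝ | ∃ x ∈ closedBall x₀ r, F x ≠ 0 ∧
            y = ‖gradient F x‖ ^ 2 / F x} := by
          refine ⟨0, ?_⟩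
          rintro y ⟨x', hx', hne, rfl⟩
          have : 0 < F x' := lt_of_le_of_ne (hF0 x') (Ne.symm hne)
          positivity
        have hmem : ‖gradient F x‖ ^ 2 / F x ∈ {y : ℝ | ∃ x ∈ closedBall x₀ r, F x ≠ 0 ∧
            y = ‖gradient F x‖ ^ 2 / F x} := ⟨x, hx, hFx, rfl⟩
        have h1 : α ≤ ‖gradient F x‖ ^ 2 / F x := hα ▸ csInf_le hbdd hmem
        calc α * F x ≤ ‖gradient F x‖ ^ 2 / F x * F x :=
              mul_le_mul_of_nonneg_right h1 (hF0 x)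
        _ = ‖gradient F x‖ ^ 2 := by field_simp
    set ρ : ℝ := 2 / Real.sqrt α * Real.sqrt (F x₀) with hρdef
    have hρ0 : 0 ≤ ρ := by positivity
    have hρr : ρ < r := by
      have h1 : Real.sqrt (F x₀) < Real.sqrt (r^2 * α / 4) :=
        Real.sqrt_lt_sqrt (hF0 x₀) (by linarith)
      have h2 : Real.sqrt (r^2 * α / 4) = r * Real.sqrt α / 2 := by
        rw [show r^2 * α / 4 = (r * Real.sqrt α / 2)^2 by
          rw [div_pow, mul_pow, Real.sq_sqrt hαpos.le]; norm_num]
        exact Real.sqrt_sq (by positivity)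
      rw [h2] at h1
      have h3 : ρ < 2 / Real.sqrt α * (r * Real.sqrt α / 2) :=
        mul_lt_mul_of_pos_left h1 (by positivity)
      calc ρ < 2 / Real.sqrt α * (r * Real.sqrt α / 2) := h3
      _ = r := by field_simp
    have hv1 : ContDiff ℝ 1 (fun x => -gradient F x) := contDiff_neg_grad hF
    obtain ⟨a₀, ha₀, hfseq⟩ := global_solution hF hF0 hαpos hρ0 hρr hkey le_rfl
    choose fseq hA hB hC using hfseq
    have estn := fun n : ℕ => flow_estimates hF hF0 hαpos hkey ha₀
      (mul_nonneg (by positivity) ha₀.le : (0:ℝ) ≤ ((n:ℝ)+1) * a₀) (hA n) (hB n) (hC n)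
    have hasDAn : ∀ (n : ℕ), ∀ t ∈ Ioo (-a₀) (((n:ℝ)+1)*a₀),
        HasDerivAt (fseq n) (-gradient F (fseq n t)) t := fun n t ht =>
      (hB n t (Ioo_subset_Icc_self ht)).hasDerivAt (Icc_mem_nhds ht.1 ht.2)
    have contn : ∀ n : ℕ, ContinuousOn (fseq n) (Icc (-a₀) (((n:ℝ)+1)*a₀)) :=
      fun n t ht => (hB n t ht).continuousWithinAt
    have agree : ∀ m n : ℕ, m ≤ n → EqOn (fseq m) (fseq n) (Icc (-a₀) (((m:ℝ)+1)*a₀)) := by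
      intro m n hmn
      have hmle : ((m:ℝ)+1) * a₀ ≤ ((n:ℝ)+1) * a₀ := by
        have : ((m:ℝ)+1) ≤ (n:ℝ)+1 := by exact_mod_cast Nat.succ_le_succ hmn
        nlinarith
      apply ode_uniq_full hv1 (t₀ := 0) ⟨by linarith, mul_pos (by positivity) ha₀⟩
        (contn m) ((contn n).mono (Icc_subset_Icc le_rfl hmle))
        (fun t ht => hasDAn m t ht)
        (fun t ht => hasDAn n t ⟨ht.1, lt_of_lt_of_le ht.2 hmle⟩)
        (by rw [hA m, hA n])
    set N : ℝ → ℕ := fun t => ⌈t / a₀⌉₊ with hNdef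
    have hN : ∀ t : ℝ, t < ((N t : ℝ) + 1) * a₀ := by
      intro t
      rcases le_or_gt t 0 with h | h
      · have h1 : (1:ℝ) ≤ (N t : ℝ) + 1 := by
          have : (0:ℝ) ≤ (N t : ℝ) := Nat.cast_nonneg _
          linarith
        nlinarith
      · have h1 : t / a₀ ≤ (N t : ℝ) := Nat.le_ceil _
        have h2 : t ≤ (N t : ℝ) * a₀ := by
          rw [div_le_iff₀ ha₀] at h1
          exact h1
        nlinarith
    set φ : ℝ → EuclideanSpace ℝ (Fin p) := fun t => fseq (N t) t with hφdef
    have hφred : ∀ (n : ℕ) (t : ℝ), t ∈ Icc (-a₀) (((n:ℝ)+1)*a₀) → φ t = fseq n t := by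
      intro n t ht
      rcases le_total (N t) n with h | h
      · exact agree (N t) n h ⟨ht.1, (hN t).le⟩
      · exact (agree n (N t) h ⟨ht.1, ht.2⟩).symm
    have hφ0 : φ 0 = x₀ := hA (N 0)
    have hφd : ∀ t : ℝ, 0 ≤ t → HasDerivAt φ (-gradient F (φ t)) t := by
      intro t ht
      set n := N t with hn
      have ht' : t ∈ Ioo (-a₀) (((n:ℝ)+1)*a₀) := ⟨by linarith, hN t⟩
      have heqn : ∀ s ∈ Ioo (-a₀) (((n:ℝ)+1)*a₀), φ s = fseq n s :=
        fun s hs => hφred n s (Ioo_subset_Icc_self hs)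
      have hd := (hasDAn n t ht').congr_of_eventuallyEq
        (by filter_upwards [isOpen_Ioo.mem_nhds ht'] with s hs using heqn s hs)
      rwa [show φ t = fseq n t from heqn t ht'] 
    have hφball : ∀ t : ℝ, 0 ≤ t → φ t ∈ closedBall x₀ r :=
      fun t ht => hC (N t) t ⟨ht, (hN t).le⟩
    have hφdecay : ∀ t : ℝ, 0 ≤ t → F (φ t) ≤ Real.exp (-α * t) * F x₀ :=
      fun t ht => (estn (N t)).1 t ⟨ht, (hN t).le⟩
    have hdist : ∀ s t : ℝ, 0 ≤ s → s ≤ t → ‖φ t - φ s‖ ≤ ρ * Real.exp (-α * s / 2) := by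
      intro s t hs hst
      set n := N t with hn
      have hsn : φ s = fseq n s := hφred n s ⟨by linarith, by linarith [hN t]⟩
      have htn : φ t = fseq n t := hφred n t ⟨by linarith, (hN t).le⟩
      have h2 := (estn n).2 s t hs hst (hN t).le
      have h3 : Real.sqrt (F (fseq n s)) ≤ Real.exp (-α * s / 2) * Real.sqrt (F x₀) := by
        have h4 : F (fseq n s) ≤ Real.exp (-α * s) * F x₀ := by
          rw [← hsn]; exact hφdecay s hs
        calc Real.sqrt (F (fseq n s)) ≤ Real.sqrt (Real.exp (-α * s) * F x₀) :=
              Real.sqrt_le_sqrt h4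
        _ = Real.exp (-α * s / 2) * Real.sqrt (F x₀) := by
            rw [Real.sqrt_mul (Real.exp_pos _).le, ← Real.exp_half]
      rw [htn, hsn]
      calc ‖fseq n t - fseq n s‖
          ≤ 2 / Real.sqrt α * (Real.sqrt (F (fseq n s)) - Real.sqrt (F (fseq n t))) := h2
      _ ≤ 2 / Real.sqrt α * Real.sqrt (F (fseq n s)) := by
          have : 0 ≤ Real.sqrt (F (fseq n t)) := Real.sqrt_nonneg _
          have h5 : (0:ℝ) ≤ 2 / Real.sqrt α := by positivity
          nlinarith
      _ ≤ 2 / Real.sqrt α * (Real.exp (-α * s / 2) * Real.sqrt (F x₀)) := by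
          have h5 : (0:ℝ) ≤ 2 / Real.sqrt α := by positivity
          exact mul_le_mul_of_nonneg_left h3 h5
      _ = ρ * Real.exp (-α * s / 2) := by rw [hρdef]; ring
    -- limit exists
    have hexp : Tendsto (fun x : ℝ => ρ * Real.exp (-α * x / 2)) atTop (𝓝 0) := by
      have h2 : Tendsto (fun x : ℝ => (α / 2) * x) atTop atTop :=
        Tendsto.const_mul_atTop (by positivity) tendsto_id
      have h1 : Tendsto (fun x : ℝ => -α * x / 2) atTop atBot :=
        (tendsto_neg_atTop_atBot.comp h2).congr (fun x => by simp only [Function.comp_apply]; ring)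
      have := Real.tendsto_exp_atBot.comp h1
      simpa using this.const_mul ρ
    have hcauchy : CauchySeq (fun n : ℕ => φ n) := by
      apply cauchySeq_of_le_tendsto_0 (fun N' : ℕ => ρ * Real.exp (-α * N' / 2))
      · intro n m N' hn hm
        have hmono : ∀ (k l : ℕ), N' ≤ k → k ≤ l →
            dist (φ l) (φ k) ≤ ρ * Real.exp (-α * N' / 2) := by
          intro k l hk hkl
          rw [dist_eq_norm]
          calc ‖φ l - φ k‖ ≤ ρ * Real.exp (-α * k / 2) :=
                hdist k l (by positivity) (by exact_mod_cast hkl)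
          _ ≤ ρ * Real.exp (-α * N' / 2) := by
              apply mul_le_mul_of_nonneg_left _ hρ0
              apply Real.exp_le_exp.mpr
              have : (N' : ℝ) ≤ (k : ℝ) := by exact_mod_cast hk
              nlinarith
        rcases le_total n m with h | h
        · rw [dist_comm]; exact hmono n m hn h
        · exact hmono m n hm h
      · exact hexp.comp tendsto_natCast_atTop_atTop
    obtain ⟨xt, hxt⟩ := cauchySeq_tendsto_of_complete hcauchy
    have hfinal : ∀ t : ℝ, 0 ≤ t → ‖φ t - xt‖ ≤ ρ * Real.exp (-α * t / 2) := by
      intro t ht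
      have hconv : Tendsto (fun n : ℕ => ‖φ t - φ n‖) atTop (𝓝 ‖φ t - xt‖) :=
        ((tendsto_const_nhds.sub hxt).norm)
      apply le_of_tendsto hconv
      filter_upwards [eventually_ge_atTop ⌈t⌉₊] with n hn
      rw [norm_sub_rev]
      exact hdist t n ht (le_trans (Nat.le_ceil t) (by exact_mod_cast hn))
    have hxtball : xt ∈ closedBall x₀ r := by
      rw [mem_closedBall_iff_norm]
      have := hfinal 0 le_rfl
      rw [hφ0] at this
      simp only [mul_zero, zero_div, Real.exp_zero, mul_one] at this
      calc ‖xt - x₀‖ = ‖x₀ - xt‖ := by rw [norm_sub_rev]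
      _ ≤ ρ := by simpa using this
      _ ≤ r := hρr.le
    have hFxt : F xt = 0 := by
      have h2 : Tendsto (fun n : ℕ => F (φ n)) atTop (𝓝 (F xt)) :=
        (hF.continuous.tendsto xt).comp hxt
      have h3 : Tendsto (fun n : ℕ => Real.exp (-α * n) * F x₀) atTop (𝓝 0) := by
        have h4 : Tendsto (fun x : ℝ => Real.exp (-α * x) * F x₀) atTop (𝓝 0) := by
          have h5 : Tendsto (fun x : ℝ => α * x) atTop atTop :=
            Tendsto.const_mul_atTop hαpos tendsto_id
          have h6 : Tendsto (fun x : ℝ => -α * x) atTop atBot :=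
            (tendsto_neg_atTop_atBot.comp h5).congr (fun x => by simp only [Function.comp_apply]; ring)
          have := (Real.tendsto_exp_atBot.comp h6).mul_const (F x₀)
          simpa using this
        exact h4.comp tendsto_natCast_atTop_atTop
      have h5 : F xt ≤ 0 := le_of_tendsto_of_tendsto' h2 h3
        (fun n => hφdecay n (by positivity))
      exact le_antisymm h5 (hF0 xt)
    refine ⟨φ, hφ0, hφd, ?_, hφball, xt, hxtball, hFxt, ?_, ?_, hφdecay⟩
    · -- uniqueness
      intro ψ hψ0 hψd t ht
      set n := N t with hn
      set T' : ℝ := ((n:ℝ)+1)*a₀ with hT'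
      have hT'pos : 0 ≤ T' := mul_nonneg (by positivity) ha₀.le
      have huniq := ode_uniq_right hv1 (a := 0) (b := T')
        (f := ψ) (g := fseq n)
        (fun s hs => (hψd s hs.1).continuousAt.continuousWithinAt)
        ((contn n).mono (Icc_subset_Icc (by linarith) le_rfl))
        (fun s hs => (hψd s hs.1).hasDerivWithinAt)
        (fun s hs => (hB n s ⟨by linarith [hs.1], hs.2.le⟩).mono_of_mem_nhdsWithin
          (Icc_mem_nhdsGE_of_mem ⟨by linarith [hs.1], hs.2⟩))
        (by rw [hψ0, hA n])
      exact (huniq ⟨ht, (hN t).le⟩).trans (hφred n t ⟨by linarith, (hN t).le⟩).symm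
    · -- convergence
      rw [tendsto_iff_dist_tendsto_zero]
      apply squeeze_zero' (by filter_upwards with t using dist_nonneg)
        (by filter_upwards [eventually_ge_atTop (0:ℝ)] with t ht using
          (by rw [dist_eq_norm]; exact hfinal t ht))
        hexp
    · -- distance bound
      intro t ht
      calc ‖φ t - xt‖ ≤ ρ * Real.exp (-α * t / 2) := hfinal t ht
      _ ≤ r * Real.exp (-α * t / 2) :=
          mul_le_mul_of_nonneg_right hρr.le (Real.exp_pos _).le
end

section
/- Let B ∈ R^{d_x × n̄}, Y ∈ R^{d_y × n̄}, and consider L(W₁,...,W_{H+1}) = (1/m)‖W_{H+1}⋯W₁ B − Y‖_F² − L̃, where L̃ is the global infimum of (1/m)‖W B − Y‖_F² over W ∈ R^{d_y × d_x} and m = n̄ d_y. If d₁ ≥ d₂ ≥ ⋯ ≥ d_{H+1} = d_y and each W_ℓ (2 ≤ ℓ ≤ H+1) is full rank, then ‖∇_{W₁} L(W)‖_F² ≥ (4/m)·σ_min²(W₂ᵀW₃ᵀ⋯W_{H+1}ᵀ)·σ_small²(B)·L(W), where σ_small(B) is the smallest nonzero singular value of B. -/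
open Matrix

/-- Product `W n * ⋯ * W 1` (omitting the first factor `W 0`). -/
def prodFrom1 (d : ℕ → ℕ) (W : ∀ ℓ, Matrix (Fin (d (ℓ + 1))) (Fin (d ℓ)) ℝ) :
    (n : ℕ) → Matrix (Fin (d (n + 1))) (Fin (d 1)) ℝ
  | 0 => (1 : Matrix (Fin (d 1)) (Fin (d 1)) ℝ)
  | n + 1 => W (n + 1) * prodFrom1 d W n

/-- Squared smallest singular value of the tall matrix `W₂ᵀ⋯W_{H+1}ᵀ = (W_{H+1}⋯W₂)ᵀ`,
i.e. the smallest eigenvalue of `(W_{H+1}⋯W₂)(W_{H+1}⋯W₂)ᵀ`. -/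
noncomputable def sigmaMinSqProd (d : ℕ → ℕ) (W : ∀ ℓ, Matrix (Fin (d (ℓ + 1))) (Fin (d ℓ)) ℝ)
    (H : ℕ) : ℝ :=
  sInf (Set.range (Matrix.isHermitian_mul_conjTranspose_self (prodFrom1 d W H)).eigenvalues)

/-- Squared smallest nonzero singular value of `B`. -/
noncomputable def sigmaSmallSq {m n : ℕ} (B : Matrix (Fin m) (Fin n) ℝ) : ℝ :=
  sInf {t : ℝ | (∃ i, t = (show (Bᵀ * B).IsHermitian by
    simpa using Matrix.isHermitian_conjTranspose_mul_self B).eigenvalues i) ∧ t ≠ 0}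

/-! ### Auxiliary lemmas -/

lemma frobSq_nonneg {m n : ℕ} (A : Matrix (Fin m) (Fin n) ℝ) : 0 ≤ frobSq A :=
  Finset.sum_nonneg fun _ _ => Finset.sum_nonneg fun _ _ => sq_nonneg _

lemma frobSq_smul {m n : ℕ} (c : ℝ) (A : Matrix (Fin m) (Fin n) ℝ) :
    frobSq (c • A) = c ^ 2 * frobSq A := by
  simp [frobSq, Finset.mul_sum, mul_pow]

lemma frobSq_neg {m n : ℕ} (A : Matrix (Fin m) (Fin n) ℝ) : frobSq (-A) = frobSq A := by
  simp [frobSq]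

lemma frobSq_eq_trace_mul_transpose {m n : ℕ} (A : Matrix (Fin m) (Fin n) ℝ) :
    frobSq A = (A * Aᵀ).trace := by
  simp [frobSq, Matrix.trace, Matrix.diag, Matrix.mul_apply, sq]

lemma frobSq_eq_trace_transpose_mul {m n : ℕ} (A : Matrix (Fin m) (Fin n) ℝ) :
    frobSq A = (Aᵀ * A).trace := by
  rw [frobSq_eq_trace_mul_transpose]; exact (Matrix.trace_mul_comm _ _)

lemma frobSq_eq_zero {m n : ℕ} {A : Matrix (Fin m) (Fin n) ℝ} (h : frobSq A = 0) : A = 0 := by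
  ext i j
  have h1 : ∀ i ∈ Finset.univ, (0:ℝ) ≤ ∑ j, (A i j)^2 :=
    fun _ _ => Finset.sum_nonneg fun _ _ => sq_nonneg _
  have := (Finset.sum_eq_zero_iff_of_nonneg h1).mp h i (Finset.mem_univ i)
  have := (Finset.sum_eq_zero_iff_of_nonneg (fun _ _ => sq_nonneg _)).mp this j (Finset.mem_univ j)
  simpa using sq_eq_zero_iff.mp this

lemma trace_mul_diagonal_mul_transpose {r k : ℕ} (f : Fin k → ℝ)
    (N : Matrix (Fin r) (Fin k) ℝ) :
    (N * diagonal f * Nᵀ).trace = ∑ i, ∑ j, f j * (N i j) ^ 2 := by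
  simp [Matrix.trace, Matrix.diag, Matrix.mul_apply, Matrix.diagonal, Finset.mul_sum, sq]
  congr 1; funext i; congr 1; funext j
  ring

lemma conjTranspose_eq_transpose_real {m n : ℕ} (A : Matrix (Fin m) (Fin n) ℝ) : Aᴴ = Aᵀ := by
  ext i j; simp [Matrix.conjTranspose_apply]

lemma spectral_real {k : ℕ} {S : Matrix (Fin k) (Fin k) ℝ} (hS : S.IsHermitian) :
    S = (hS.eigenvectorUnitary : Matrix (Fin k) (Fin k) ℝ) * diagonal hS.eigenvalues *
      (star (hS.eigenvectorUnitary : Matrix (Fin k) (Fin k) ℝ)) := by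
  have := hS.spectral_theorem
  simpa [RCLike.ofReal_real_eq_id] using this

lemma quad_lower {k q : ℕ} {S : Matrix (Fin k) (Fin k) ℝ} (hS : S.IsHermitian)
    (N : Matrix (Fin k) (Fin q) ℝ) :
    sInf (Set.range hS.eigenvalues) * frobSq N ≤ (Nᵀ * S * N).trace := by
  set U : Matrix (Fin k) (Fin k) ℝ := (hS.eigenvectorUnitary : Matrix (Fin k) (Fin k) ℝ) with hU
  have hU1 : U * star U = 1 := (Matrix.mem_unitaryGroup_iff).mp hS.eigenvectorUnitary.2
  have hU2 : star U * U = 1 := (Matrix.mem_unitaryGroup_iff').mp hS.eigenvectorUnitary.2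
  set M : Matrix (Fin k) (Fin q) ℝ := star U * N with hM
  have hMT : Mᵀ = Nᵀ * U := by
    rw [hM, Matrix.transpose_mul, Matrix.star_eq_conjTranspose,
      conjTranspose_eq_transpose_real, Matrix.transpose_transpose]
  have key : Nᵀ * S * N = Mᵀ * diagonal hS.eigenvalues * M := by
    calc Nᵀ * S * N
        = Nᵀ * (U * diagonal hS.eigenvalues * star U) * N := by rw [hU, ← spectral_real hS]
      _ = Mᵀ * diagonal hS.eigenvalues * M := by
          rw [hMT, hM]; simp only [Matrix.mul_assoc]
  have hfrob : frobSq N = frobSq M := by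
    rw [frobSq_eq_trace_transpose_mul N, frobSq_eq_trace_transpose_mul M, hMT, hM,
      Matrix.mul_assoc, ← Matrix.mul_assoc U, hU1, Matrix.one_mul]
  rw [key, hfrob]
  have htr : (Mᵀ * diagonal hS.eigenvalues * M).trace
      = ∑ i, ∑ j, hS.eigenvalues j * (Mᵀ i j) ^ 2 := by
    have := trace_mul_diagonal_mul_transpose hS.eigenvalues Mᵀ
    rwa [Matrix.transpose_transpose] at this
  rw [htr]
  have hfM : frobSq M = ∑ i, ∑ j, (Mᵀ i j) ^ 2 := by
    rw [frobSq]; rw [Finset.sum_comm]; rfl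
  rw [hfM, Finset.mul_sum]
  refine Finset.sum_le_sum fun i _ => ?_
  rw [Finset.mul_sum]
  refine Finset.sum_le_sum fun j _ => ?_
  refine mul_le_mul_of_nonneg_right ?_ (sq_nonneg _)
  exact csInf_le (Set.finite_range _).bddBelow ⟨j, rfl⟩

lemma sigmaSmallSq_nonneg {p n : ℕ} (B : Matrix (Fin p) (Fin n) ℝ) : 0 ≤ sigmaSmallSq B := by
  apply Real.sInf_nonneg
  rintro t ⟨⟨i, rfl⟩, -⟩
  exact Matrix.eigenvalues_conjTranspose_mul_self_nonneg B i

lemma sigmaMinSqProd_nonneg (d : ℕ → ℕ) (W : ∀ ℓ, Matrix (Fin (d (ℓ + 1))) (Fin (d ℓ)) ℝ)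
    (H : ℕ) : 0 ≤ sigmaMinSqProd d W H := by
  apply Real.sInf_nonneg
  rintro t ⟨i, rfl⟩
  exact Matrix.eigenvalues_self_mul_conjTranspose_nonneg _ i

lemma exists_proj {p n : ℕ} (B : Matrix (Fin p) (Fin n) ℝ) :
    ∃ P : Matrix (Fin n) (Fin n) ℝ,
      B * P = B ∧
      (∀ r (M : Matrix (Fin r) (Fin n) ℝ), frobSq M = frobSq (M * P) + frobSq (M - M * P)) ∧
      (∀ r (M : Matrix (Fin r) (Fin n) ℝ),
        sigmaSmallSq B * frobSq (M * P) ≤ frobSq (M * Bᵀ)) := by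
  classical
  set hB : (Bᵀ * B).IsHermitian := (by simpa using Matrix.isHermitian_conjTranspose_mul_self B) with hhB
  set μ : Fin n → ℝ := hB.eigenvalues with hμ
  set U : Matrix (Fin n) (Fin n) ℝ := (hB.eigenvectorUnitary : Matrix (Fin n) (Fin n) ℝ) with hU
  have hU1 : U * star U = 1 := (Matrix.mem_unitaryGroup_iff).mp hB.eigenvectorUnitary.2
  have hU2 : star U * U = 1 := (Matrix.mem_unitaryGroup_iff').mp hB.eigenvectorUnitary.2
  have hUT : (star U)ᵀ = U := by
    rw [Matrix.star_eq_conjTranspose, conjTranspose_eq_transpose_real, Matrix.transpose_transpose]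
  have hspec : Bᵀ * B = U * diagonal μ * star U := by
    rw [hμ, hU]
    exact spectral_real hB
  set ind : Fin n → ℝ := fun j => if μ j = 0 then 0 else 1 with hind
  set P : Matrix (Fin n) (Fin n) ℝ := U * diagonal ind * star U with hP
  have coreA : ∀ (r : ℕ) (N : Matrix (Fin r) (Fin n) ℝ) (g : Fin n → ℝ),
      frobSq (N * diagonal g * star U) = ∑ i, ∑ j, (g j) ^ 2 * (N i j) ^ 2 := by
    intro r N g
    rw [frobSq_eq_trace_mul_transpose]
    have hXT : (N * diagonal g * star U)ᵀ = U * diagonal g * Nᵀ := by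
      rw [Matrix.transpose_mul, Matrix.transpose_mul, hUT, Matrix.diagonal_transpose,
        Matrix.mul_assoc]
    rw [hXT]
    have : N * diagonal g * star U * (U * diagonal g * Nᵀ)
        = N * diagonal (fun j => g j * g j) * Nᵀ := by
      calc N * diagonal g * star U * (U * diagonal g * Nᵀ)
          = N * diagonal g * (star U * U) * (diagonal g * Nᵀ) := by
            simp only [Matrix.mul_assoc]
        _ = N * (diagonal g * diagonal g) * Nᵀ := by
            rw [hU2, Matrix.mul_one]; simp only [Matrix.mul_assoc]
        _ = N * diagonal (fun j => g j * g j) * Nᵀ := by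
            rw [Matrix.diagonal_mul_diagonal]
    rw [this, trace_mul_diagonal_mul_transpose]
    congr 1; funext i; congr 1; funext j; ring
  have hMP : ∀ (r : ℕ) (M : Matrix (Fin r) (Fin n) ℝ),
      M * P = (M * U) * diagonal ind * star U := by
    intro r M; rw [hP]; simp only [Matrix.mul_assoc]
  have hMsub : ∀ (r : ℕ) (M : Matrix (Fin r) (Fin n) ℝ),
      M - M * P = (M * U) * diagonal (fun j => 1 - ind j) * star U := by
    intro r M
    have h1 : diagonal (fun j => (1:ℝ) - ind j) = 1 - diagonal ind := by
      rw [← Matrix.diagonal_one, Matrix.diagonal_sub]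
    rw [h1, Matrix.mul_sub, Matrix.sub_mul, Matrix.mul_one, Matrix.mul_assoc, hU1,
      Matrix.mul_one, hMP]
  have hMfull : ∀ (r : ℕ) (M : Matrix (Fin r) (Fin n) ℝ),
      frobSq M = ∑ i, ∑ j, ((M * U) i j) ^ 2 := by
    intro r M
    have hid : M = (M * U) * diagonal (fun _ : Fin n => (1:ℝ)) * star U := by
      rw [Matrix.diagonal_one, Matrix.mul_one, Matrix.mul_assoc, hU1, Matrix.mul_one]
    calc frobSq M = frobSq ((M * U) * diagonal (fun _ : Fin n => (1:ℝ)) * star U) := by rw [← hid]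
      _ = ∑ i, ∑ j, ((1:ℝ)) ^ 2 * ((M * U) i j) ^ 2 := coreA r (M * U) _
      _ = ∑ i, ∑ j, ((M * U) i j) ^ 2 := by simp
  have hcoreB : ∀ (r : ℕ) (M : Matrix (Fin r) (Fin n) ℝ),
      frobSq (M * Bᵀ) = ∑ i, ∑ j, μ j * ((M * U) i j) ^ 2 := by
    intro r M
    rw [frobSq_eq_trace_mul_transpose]
    have hXT : (M * Bᵀ)ᵀ = B * Mᵀ := by
      rw [Matrix.transpose_mul, Matrix.transpose_transpose]
    have hstarU : star U = Uᵀ := by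
      rw [Matrix.star_eq_conjTranspose, conjTranspose_eq_transpose_real]
    have : M * Bᵀ * (B * Mᵀ) = (M * U) * diagonal μ * (M * U)ᵀ := by
      calc M * Bᵀ * (B * Mᵀ) = M * (Bᵀ * B) * Mᵀ := by simp only [Matrix.mul_assoc]
        _ = M * (U * diagonal μ * star U) * Mᵀ := by rw [hspec]
        _ = (M * U) * diagonal μ * (star U * Mᵀ) := by simp only [Matrix.mul_assoc]
        _ = (M * U) * diagonal μ * (M * U)ᵀ := by
            rw [Matrix.transpose_mul, hstarU]
    rw [hXT, this, trace_mul_diagonal_mul_transpose]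
  have hcoreC : ∀ j, ∑ i, ((B * U) i j) ^ 2 = μ j := by
    have hstarU : star U = Uᵀ := by
      rw [Matrix.star_eq_conjTranspose, conjTranspose_eq_transpose_real]
    have hD : (B * U)ᵀ * (B * U) = diagonal μ := by
      calc (B * U)ᵀ * (B * U) = star U * (Bᵀ * B) * U := by
            rw [Matrix.transpose_mul, hstarU]; simp only [Matrix.mul_assoc]
        _ = star U * (U * diagonal μ * star U) * U := by rw [hspec]
        _ = (star U * U) * diagonal μ * (star U * U) := by simp only [Matrix.mul_assoc]
        _ = diagonal μ := by rw [hU2, Matrix.one_mul, Matrix.mul_one]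
    intro j
    have := congrFun (congrFun hD j) j
    rw [Matrix.mul_apply] at this
    simp only [Matrix.diagonal_apply_eq, Matrix.transpose_apply] at this
    rw [← this]
    congr 1; funext i; ring
  have hBP : B * P = B := by
    have hz : frobSq (B - B * P) = 0 := by
      rw [hMsub p B, coreA p (B * U) _]
      rw [Finset.sum_comm]
      have : ∀ j ∈ Finset.univ, (∑ i, ((1:ℝ) - ind j) ^ 2 * ((B * U) i j) ^ 2) = 0 := by
        intro j _
        rw [← Finset.mul_sum, hcoreC j]
        by_cases h : μ j = 0
        · rw [h, mul_zero]
        · simp [hind, h]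
      exact Finset.sum_eq_zero this
    have := frobSq_eq_zero hz
    rw [sub_eq_zero] at this
    exact this.symm
  refine ⟨P, hBP, ?_, ?_⟩
  · intro r M
    rw [hMsub r M, hMP r M, coreA r (M * U) ind, coreA r (M * U) _, hMfull r M,
      ← Finset.sum_add_distrib]
    refine Finset.sum_congr rfl fun i _ => ?_
    rw [← Finset.sum_add_distrib]
    refine Finset.sum_congr rfl fun j _ => ?_
    by_cases h : μ j = 0 <;> simp [hind, h]
  · intro r M
    rw [hMP r M, coreA r (M * U) ind, hcoreB r M, Finset.mul_sum]
    refine Finset.sum_le_sum fun i _ => ?_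
    rw [Finset.mul_sum]
    refine Finset.sum_le_sum fun j _ => ?_
    by_cases h : μ j = 0
    · simp [hind, h]
    · have h1 : ind j = 1 := by simp [hind, h]
      rw [h1, one_pow, one_mul]
      refine mul_le_mul_of_nonneg_right ?_ (sq_nonneg _)
      have hmem : μ j ∈ {t : ℝ | (∃ i, t = hB.eigenvalues i) ∧ t ≠ 0} :=
        ⟨⟨j, rfl⟩, h⟩
      have hbdd : BddBelow {t : ℝ | (∃ i, t = hB.eigenvalues i) ∧ t ≠ 0} := by
        apply Set.Finite.bddBelow
        apply Set.Finite.subset (Set.finite_range hB.eigenvalues)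
        rintro t ⟨⟨i, rfl⟩, -⟩
        exact ⟨i, rfl⟩
      exact csInf_le hbdd hmem

theorem gradient_lower_bound (H nbar : ℕ) (d : ℕ → ℕ)
    (hdim : ∀ ℓ, 1 ≤ ℓ → ℓ ≤ H → d (ℓ + 1) ≤ d ℓ)
    (B : Matrix (Fin (d 0)) (Fin nbar) ℝ)
    (Y : Matrix (Fin (d (H + 1))) (Fin nbar) ℝ)
    (m : ℕ) (hm : m = nbar * d (H + 1))
    (W : ∀ ℓ, Matrix (Fin (d (ℓ + 1))) (Fin (d ℓ)) ℝ)
    (hrank : ∀ ℓ, 1 ≤ ℓ → ℓ ≤ H → (W ℓ).rank = d (ℓ + 1)) :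
    (4 / (m : ℝ)) * sigmaMinSqProd d W H * sigmaSmallSq B *
        ((1 / (m : ℝ)) * frobSq (chainProd d W (H + 1) * B - Y) -
          sInf {l : ℝ | ∃ W' : Matrix (Fin (d (H + 1))) (Fin (d 0)) ℝ,
            l = (1 / (m : ℝ)) * frobSq (W' * B - Y)}) ≤
      frobSq ((2 / (m : ℝ)) •
        ((prodFrom1 d W H)ᵀ * (chainProd d W (H + 1) * B - Y) * Bᵀ)) := by
  obtain ⟨P, hBP, hPyth, hSig⟩ := exists_proj B
  set R : Matrix (Fin (d (H + 1))) (Fin (d 1)) ℝ := prodFrom1 d W H with hR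
  set C : Matrix (Fin (d (H + 1))) (Fin (d 0)) ℝ := chainProd d W (H + 1) with hC
  set E : Matrix (Fin (d (H + 1))) (Fin nbar) ℝ := C * B - Y with hE
  set lam : ℝ := sigmaMinSqProd d W H with hlam
  set σ : ℝ := sigmaSmallSq B with hσ
  have hlam0 : 0 ≤ lam := sigmaMinSqProd_nonneg d W H
  have hσ0 : 0 ≤ σ := sigmaSmallSq_nonneg B
  have hm0 : (0:ℝ) ≤ 1 / (m:ℝ) := by positivity
  -- residual fact: for any matrix Z of the right shape, (Z*B - Y) - (Z*B - Y)*P = -(Y - Y*P)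
  have hres : ∀ (Z : Matrix (Fin (d (H + 1))) (Fin (d 0)) ℝ),
      (Z * B - Y) - (Z * B - Y) * P = -(Y - Y * P) := by
    intro Z
    have h1 : Z * B * P = Z * B := by rw [Matrix.mul_assoc, hBP]
    rw [Matrix.sub_mul, h1]
    abel
  -- lower bound for the infimum
  set Lset : Set ℝ := {l : ℝ | ∃ W' : Matrix (Fin (d (H + 1))) (Fin (d 0)) ℝ,
      l = (1 / (m : ℝ)) * frobSq (W' * B - Y)} with hLset
  have hne : Lset.Nonempty := ⟨_, 0, rfl⟩
  have hlb : ∀ l ∈ Lset, (1 / (m:ℝ)) * frobSq (Y - Y * P) ≤ l := by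
    rintro l ⟨W', rfl⟩
    have hp := hPyth _ (W' * B - Y)
    rw [hres W', frobSq_neg] at hp
    have : frobSq (Y - Y * P) ≤ frobSq (W' * B - Y) := by
      have := frobSq_nonneg ((W' * B - Y) * P)
      linarith
    exact mul_le_mul_of_nonneg_left this hm0
  have hInf : (1 / (m:ℝ)) * frobSq (Y - Y * P) ≤ sInf Lset := le_csInf hne hlb
  -- Pythagoras for E
  have hEp : frobSq E = frobSq (E * P) + frobSq (Y - Y * P) := by
    have hp := hPyth _ E
    rw [hE, hres C, frobSq_neg] at hp
    rw [hE]; exact hp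
  have stepB : (1 / (m:ℝ)) * frobSq E - sInf Lset ≤ (1 / (m:ℝ)) * frobSq (E * P) := by
    have h1 : (1 / (m:ℝ)) * frobSq E
        = (1 / (m:ℝ)) * frobSq (E * P) + (1 / (m:ℝ)) * frobSq (Y - Y * P) := by
      rw [hEp]; ring
    linarith
  -- spectral bound
  have hQ : lam * frobSq (E * Bᵀ) ≤ frobSq (Rᵀ * (E * Bᵀ)) := by
    have hq := quad_lower (Matrix.isHermitian_mul_conjTranspose_self R) (E * Bᵀ)
    have hid : ((E * Bᵀ)ᵀ * (R * Rᴴ) * (E * Bᵀ)) = (Rᵀ * (E * Bᵀ))ᵀ * (Rᵀ * (E * Bᵀ)) := by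
      rw [conjTranspose_eq_transpose_real]
      simp only [Matrix.transpose_mul, Matrix.transpose_transpose, Matrix.mul_assoc]
    rw [hid, ← frobSq_eq_trace_transpose_mul] at hq
    exact hq
  have hSigE : σ * frobSq (E * P) ≤ frobSq (E * Bᵀ) := hSig _ E
  -- assemble
  have hRHS : frobSq ((2 / (m : ℝ)) • (Rᵀ * E * Bᵀ))
      = (2 / (m:ℝ)) ^ 2 * frobSq (Rᵀ * (E * Bᵀ)) := by
    rw [frobSq_smul, Matrix.mul_assoc]
  have h2m : (0:ℝ) ≤ (2 / (m:ℝ)) ^ 2 := sq_nonneg _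
  have h4lamσ : (0:ℝ) ≤ 4 / (m:ℝ) * lam * σ := by positivity
  calc (4 / (m : ℝ)) * lam * σ * ((1 / (m : ℝ)) * frobSq E - sInf Lset)
      ≤ (4 / (m : ℝ)) * lam * σ * ((1 / (m:ℝ)) * frobSq (E * P)) :=
        mul_le_mul_of_nonneg_left stepB h4lamσ
    _ = (2 / (m:ℝ)) ^ 2 * (lam * (σ * frobSq (E * P))) := by ring
    _ ≤ (2 / (m:ℝ)) ^ 2 * (lam * frobSq (E * Bᵀ)) :=
        mul_le_mul_of_nonneg_left (mul_le_mul_of_nonneg_left hSigE hlam0) h2m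
    _ ≤ (2 / (m:ℝ)) ^ 2 * frobSq (Rᵀ * (E * Bᵀ)) :=
        mul_le_mul_of_nonneg_left hQ h2m
    _ = frobSq ((2 / (m : ℝ)) • (Rᵀ * E * Bᵀ)) := hRHS.symm
end
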